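/- arXiv:2407.10751 — 5 statements merged into one kernel-verified Lean document; each statement's English description precedes it below -/
import Mathlib

section
/- Let ν > 0, let ξ = (ξ₁, ξ₂) ∈ ℝ² be nonzero with Euclidean norm |ξ|, let μ ∈ ℂ satisfy Re μ > 0 and μ ≠ |ξ|, and set λ := ν μ² − ν|ξ|² (note λ ≠ 0). Let f : [0,∞) → ℂ² be continuous with compact support. Define the 2×2 matrix K := [[ξ₂², −ξ₁ξ₂], [−ξ₁ξ₂, ξ₁²]] and, for y ≥ 0, u(y) := ∫₀^∞ [ (1/(2νμ)) (e^{−μ|y−z|} + e^{−μ(y+z)}) I₂ + ((μ + |ξ|)/(μ λ |ξ|)) e^{−μ(y+z)} K ] f(z) dz, where I₂ is the 2×2 identity matrix. Then u is twice differentiable on (0,∞) with λ u(y) − ν (u''(y) − |ξ|² u(y)) = f(y) for every y > 0, and u satisfies the boundary condition −(u'(0) + |ξ| u(0)) + |ξ|⁻¹ (ξ₁ u₁(0) + ξ₂ u₂(0)) (ξ₁, ξ₂) = 0, where u'(0) is the one-sided derivative at 0. -/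
open MeasureTheory Set Complex

noncomputable section



private lemma srgIntOn (f : ℝ → Fin 2 → ℂ) (hf : Continuous f) (hfc : HasCompactSupport f)
    (c : ℝ → ℂ) (hc : Continuous c) (S : Set ℝ) :
    IntegrableOn (fun z => c z • f z) S volume := by
  have h1 : Continuous fun z => c z • f z := hc.smul hf
  have h2 : HasCompactSupport fun z => c z • f z :=
    hfc.mono (fun x hx => by
      simp only [Function.mem_support, ne_eq] at hx ⊢
      intro h; exact hx (by rw [h, smul_zero]))
  exact (h1.integrable_of_hasCompactSupport h2).integrableOn

private lemma srgFTC (f : ℝ → Fin 2 → ℂ) (hf : Continuous f)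
    (c : ℝ → ℂ) (hc : Continuous c) (y : ℝ) :
    HasDerivAt (fun t => ∫ z in (0:ℝ)..t, c z • f z) (c y • f y) y := by
  have h1 : Continuous fun z => c z • f z := hc.smul hf
  exact intervalIntegral.integral_hasDerivAt_right (h1.intervalIntegrable _ _)
    (h1.stronglyMeasurableAtFilter _ _) h1.continuousAt

private lemma srgExpDeriv (μ : ℂ) (t : ℝ) :
    HasDerivAt (fun t : ℝ => Complex.exp (μ * t)) (μ * Complex.exp (μ * t)) t := by
  have h1 : HasDerivAt (fun t : ℝ => μ * (t:ℂ)) μ t := by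
    simpa using (Complex.ofRealCLM.hasDerivAt (x := t)).const_mul μ
  simpa [mul_comm] using h1.cexp

private lemma srgSplit (μ : ℂ) (f : ℝ → Fin 2 → ℂ) (hf : Continuous f)
    (hfc : HasCompactSupport f) (y : ℝ) (hy : 0 ≤ y) :
    ∫ z in Ioi (0:ℝ), Complex.exp (-μ * (|y - z| : ℝ)) • f z
      = Complex.exp (-μ * y) • (∫ z in (0:ℝ)..y, Complex.exp (μ * z) • f z)
        + Complex.exp (μ * y) • ((∫ z in Ioi (0:ℝ), Complex.exp (-μ * z) • f z)
            - ∫ z in (0:ℝ)..y, Complex.exp (-μ * z) • f z) := by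
  have hcont : Continuous fun z : ℝ => Complex.exp (-μ * (|y - z| : ℝ)) := by
    fun_prop
  have hconte : Continuous fun z : ℝ => Complex.exp (-μ * z) := by fun_prop
  have h1 : IntegrableOn (fun z => Complex.exp (-μ * (|y - z| : ℝ)) • f z) (Ioc 0 y) volume :=
    srgIntOn f hf hfc _ hcont _
  have h2 : IntegrableOn (fun z => Complex.exp (-μ * (|y - z| : ℝ)) • f z) (Ioi y) volume :=
    srgIntOn f hf hfc _ hcont _
  have h3 : IntegrableOn (fun z : ℝ => Complex.exp (-μ * z) • f z) (Ioc 0 y) volume :=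
    srgIntOn f hf hfc _ hconte _
  have h4 : IntegrableOn (fun z : ℝ => Complex.exp (-μ * z) • f z) (Ioi y) volume :=
    srgIntOn f hf hfc _ hconte _
  have hdisj : Disjoint (Ioc (0:ℝ) y) (Ioi y) := Ioc_disjoint_Ioi le_rfl
  have hsplit : ∫ z in Ioi (0:ℝ), Complex.exp (-μ * (|y - z| : ℝ)) • f z
      = (∫ z in Ioc (0:ℝ) y, Complex.exp (-μ * (|y - z| : ℝ)) • f z)
        + ∫ z in Ioi y, Complex.exp (-μ * (|y - z| : ℝ)) • f z := by
    rw [← setIntegral_union hdisj measurableSet_Ioi h1 h2, Ioc_union_Ioi_eq_Ioi hy]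
  have e1 : ∫ z in Ioc (0:ℝ) y, Complex.exp (-μ * (|y - z| : ℝ)) • f z
      = Complex.exp (-μ * y) • ∫ z in (0:ℝ)..y, Complex.exp (μ * z) • f z := by
    rw [intervalIntegral.integral_of_le hy, ← integral_smul]
    refine setIntegral_congr_fun measurableSet_Ioc (fun z hz => ?_)
    rw [_root_.abs_of_nonneg (sub_nonneg.2 hz.2), smul_smul, ← Complex.exp_add]
    congr 1
    push_cast
    ring
  have e2 : ∫ z in Ioi y, Complex.exp (-μ * (|y - z| : ℝ)) • f z
      = Complex.exp (μ * y) • ∫ z in Ioi y, Complex.exp (-μ * z) • f z := by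
    rw [← integral_smul]
    refine setIntegral_congr_fun measurableSet_Ioi (fun z hz => ?_)
    rw [_root_.abs_of_nonpos (sub_nonpos.2 (le_of_lt hz)), smul_smul, ← Complex.exp_add]
    congr 1
    push_cast
    ring
  have e3 : ∫ z in Ioi y, Complex.exp (-μ * z) • f z
      = (∫ z in Ioi (0:ℝ), Complex.exp (-μ * z) • f z)
          - ∫ z in (0:ℝ)..y, Complex.exp (-μ * z) • f z := by
    rw [intervalIntegral.integral_of_le hy, eq_sub_iff_add_eq, add_comm,
      ← setIntegral_union hdisj measurableSet_Ioi h3 h4, Ioc_union_Ioi_eq_Ioi hy]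
  rw [hsplit, e1, e2, e3]



set_option maxHeartbeats 1000000 in
/-- The explicit Green's function for the resolvent of the Stokes vorticity problem on the
half-line satisfies the resolvent equation and the vorticity boundary condition. -/
theorem stokes_resolvent_green_function
    (ν : ℝ) (hν : 0 < ν)
    (ξ₁ ξ₂ : ℝ) (hξ : (ξ₁, ξ₂) ≠ (0, 0))
    (μ : ℂ) (hμre : 0 < μ.re)
    (hμ : μ ≠ (Real.sqrt (ξ₁ ^ 2 + ξ₂ ^ 2) : ℂ))
    (lam : ℂ) (hlam : lam = (ν : ℂ) * μ ^ 2 - (ν : ℂ) * ((ξ₁ ^ 2 + ξ₂ ^ 2 : ℝ) : ℂ))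
    (f : ℝ → Fin 2 → ℂ) (hf : Continuous f) (hfc : HasCompactSupport f)
    (K : Matrix (Fin 2) (Fin 2) ℂ)
    (hK : K = !![((ξ₂ ^ 2 : ℝ) : ℂ), -(((ξ₁ * ξ₂ : ℝ) : ℂ));
                 -(((ξ₁ * ξ₂ : ℝ) : ℂ)), ((ξ₁ ^ 2 : ℝ) : ℂ)])
    (u : ℝ → Fin 2 → ℂ)
    (hu : ∀ y, u y = ∫ z in Ioi (0 : ℝ),
      ((1 / (2 * (ν : ℂ) * μ)) *
        (Complex.exp (-μ * (|y - z| : ℝ)) + Complex.exp (-μ * ((y + z : ℝ) : ℂ)))) • f z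
      + (((μ + (Real.sqrt (ξ₁ ^ 2 + ξ₂ ^ 2) : ℝ)) /
            (μ * lam * ((Real.sqrt (ξ₁ ^ 2 + ξ₂ ^ 2) : ℝ) : ℂ))) *
          Complex.exp (-μ * ((y + z : ℝ) : ℂ))) • K.mulVec (f z)) :
    (∀ y ∈ Ioi (0 : ℝ),
        DifferentiableAt ℝ u y ∧ DifferentiableAt ℝ (deriv u) y ∧
        lam • u y - (ν : ℂ) • (deriv (deriv u) y - ((ξ₁ ^ 2 + ξ₂ ^ 2 : ℝ) : ℂ) • u y) = f y)
    ∧ -(derivWithin u (Ici 0) 0 + ((Real.sqrt (ξ₁ ^ 2 + ξ₂ ^ 2) : ℝ) : ℂ) • u 0)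
        + (((Real.sqrt (ξ₁ ^ 2 + ξ₂ ^ 2) : ℝ) : ℂ))⁻¹ •
          (((ξ₁ : ℂ) * u 0 0 + (ξ₂ : ℂ) * u 0 1) • ![(ξ₁ : ℂ), (ξ₂ : ℂ)]) = 0 := by
  -- basic positivity / nonvanishing facts
  have hne : ξ₁ ≠ 0 ∨ ξ₂ ≠ 0 := by
    by_contra h
    push_neg at h
    exact hξ (by simp [h.1, h.2])
  have hS0 : 0 < ξ₁ ^ 2 + ξ₂ ^ 2 := by
    rcases hne with h | h
    · have := pow_two_pos_of_ne_zero h  -- h : ξ₁ ≠ 0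
      nlinarith [sq_nonneg ξ₂]
    · have := pow_two_pos_of_ne_zero h
      nlinarith [sq_nonneg ξ₁]
  set s : ℝ := Real.sqrt (ξ₁ ^ 2 + ξ₂ ^ 2) with hsdef
  have hs0 : 0 < s := Real.sqrt_pos.2 hS0
  have hsq : ((s : ℂ)) ^ 2 = ((ξ₁ ^ 2 + ξ₂ ^ 2 : ℝ) : ℂ) := by
    rw [← Complex.ofReal_pow, Real.sq_sqrt hS0.le]
  have hsq2 : ((s : ℂ)) ^ 2 = (ξ₁ : ℂ) ^ 2 + (ξ₂ : ℂ) ^ 2 := by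
    rw [hsq]; push_cast; ring
  have hsne : (s : ℂ) ≠ 0 := by
    simpa using Complex.ofReal_ne_zero.2 hs0.ne'
  have hμ0 : μ ≠ 0 := by
    intro h; rw [h] at hμre; simp at hμre
  have hν0 : (ν : ℂ) ≠ 0 := Complex.ofReal_ne_zero.2 hν.ne'
  have hμs : μ - (s : ℂ) ≠ 0 := sub_ne_zero.2 hμ
  have hμps : μ + (s : ℂ) ≠ 0 := by
    intro h
    have h2 : (μ + (s : ℂ)).re = 0 := by rw [h]; simp
    rw [Complex.add_re, Complex.ofReal_re] at h2
    linarith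
  have hlam0 : lam ≠ 0 := by
    have : lam = (ν : ℂ) * ((μ - s) * (μ + s)) := by rw [hlam, ← hsq]; ring
    rw [this]
    exact mul_ne_zero hν0 (mul_ne_zero hμs hμps)
  -- K applied to f is continuous with compact support
  set fK : ℝ → Fin 2 → ℂ := fun z => K.mulVec (f z) with hfKdef
  have hfK : Continuous fK := (LinearMap.toContinuousLinearMap K.mulVecLin).continuous.comp hf
  have hfKc : HasCompactSupport fK := by
    refine hfc.mono (fun x hx => ?_)
    simp only [Function.mem_support, ne_eq] at hx ⊢
    intro h
    apply hx
    show K.mulVec (f x) = 0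
    rw [h, Matrix.mulVec_zero]
  -- building blocks
  set Cv : Fin 2 → ℂ := ∫ z in Ioi (0:ℝ), Complex.exp (-μ * z) • f z with hCvdef
  set av : ℝ → Fin 2 → ℂ := fun t => ∫ z in (0:ℝ)..t, Complex.exp (μ * z) • f z with havdef
  set bv : ℝ → Fin 2 → ℂ := fun t => ∫ z in (0:ℝ)..t, Complex.exp (-μ * z) • f z with hbvdef
  set cH : ℂ := 1 / (2 * ν * μ) with hcHdef
  set cR : ℂ := (μ + s) / (μ * lam * s) with hcRdef
  set KC : Fin 2 → ℂ := K.mulVec Cv with hKCdef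
  set g : ℝ → Fin 2 → ℂ := fun t => cH • (Complex.exp (-μ * t) • av t
      + Complex.exp (μ * t) • (Cv - bv t) + Complex.exp (-μ * t) • Cv)
      + (cR * Complex.exp (-μ * t)) • KC with hgdef
  set g1 : ℝ → Fin 2 → ℂ := fun t => cH • ((-μ * Complex.exp (-μ * t)) • av t
      + (μ * Complex.exp (μ * t)) • (Cv - bv t) + (-μ * Complex.exp (-μ * t)) • Cv)
      + (-μ * cR * Complex.exp (-μ * t)) • KC with hg1def
  set g2 : ℝ → Fin 2 → ℂ := fun t => (μ ^ 2) • g t - ((ν : ℂ)⁻¹) • f t with hg2def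
  -- u agrees with g on [0, ∞)
  have hug : ∀ t : ℝ, 0 ≤ t → u t = g t := by
    intro t ht
    have hintH : IntegrableOn (fun z : ℝ =>
        ((1 / (2 * (ν : ℂ) * μ)) * (Complex.exp (-μ * (|t - z| : ℝ))
          + Complex.exp (-μ * ((t + z : ℝ) : ℂ)))) • f z) (Ioi 0) volume :=
      srgIntOn f hf hfc _ (by fun_prop) _
    have hintR : IntegrableOn (fun z : ℝ =>
        (((μ + (s:ℂ)) / (μ * lam * (s:ℂ))) * Complex.exp (-μ * ((t + z : ℝ) : ℂ))) • fK z)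
        (Ioi 0) volume :=
      srgIntOn fK hfK hfKc _ (by fun_prop) _
    have hint1 : IntegrableOn (fun z : ℝ => cH • (Complex.exp (-μ * (|t - z| : ℝ)) • f z))
        (Ioi 0) volume := by
      have := srgIntOn f hf hfc (fun z : ℝ => cH * Complex.exp (-μ * (|t - z| : ℝ)))
        (by fun_prop) (Ioi 0)
      simpa [smul_smul] using this
    have hint2 : IntegrableOn
        (fun z : ℝ => (cH * Complex.exp (-μ * t)) • (Complex.exp (-μ * z) • f z))
        (Ioi 0) volume := by
      have := srgIntOn f hf hfc
        (fun z : ℝ => cH * Complex.exp (-μ * t) * Complex.exp (-μ * z)) (by fun_prop) (Ioi 0)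
      simpa [smul_smul] using this
    have step1 : (∫ z in Ioi (0:ℝ),
        ((1 / (2 * (ν : ℂ) * μ)) * (Complex.exp (-μ * (|t - z| : ℝ))
          + Complex.exp (-μ * ((t + z : ℝ) : ℂ)))) • f z)
        = cH • (∫ z in Ioi (0:ℝ), Complex.exp (-μ * (|t - z| : ℝ)) • f z)
          + (cH * Complex.exp (-μ * t)) • Cv := by
      have hptw : ∀ z : ℝ,
          ((1 / (2 * (ν : ℂ) * μ)) * (Complex.exp (-μ * (|t - z| : ℝ))
            + Complex.exp (-μ * ((t + z : ℝ) : ℂ)))) • f z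
          = cH • (Complex.exp (-μ * (|t - z| : ℝ)) • f z)
            + (cH * Complex.exp (-μ * t)) • (Complex.exp (-μ * z) • f z) := by
        intro z
        rw [smul_smul, smul_smul, ← add_smul]
        congr 1
        rw [hcHdef, show (-μ * ((t + z : ℝ) : ℂ)) = (-μ * t) + (-μ * z) by push_cast; ring,
          Complex.exp_add]
        ring
      rw [setIntegral_congr_fun measurableSet_Ioi (fun z _ => hptw z),
        integral_add hint1 hint2, integral_smul, integral_smul]
    have step2 : (∫ z in Ioi (0:ℝ),
        (((μ + (s:ℂ)) / (μ * lam * (s:ℂ))) * Complex.exp (-μ * ((t + z : ℝ) : ℂ))) • fK z)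
        = (cR * Complex.exp (-μ * t)) • KC := by
      have hptw : ∀ z : ℝ,
          (((μ + (s:ℂ)) / (μ * lam * (s:ℂ))) * Complex.exp (-μ * ((t + z : ℝ) : ℂ))) • fK z
          = (cR * Complex.exp (-μ * t)) • (Complex.exp (-μ * z) • fK z) := by
        intro z
        rw [smul_smul]
        congr 1
        rw [hcRdef, show (-μ * ((t + z : ℝ) : ℂ)) = (-μ * t) + (-μ * z) by push_cast; ring,
          Complex.exp_add]
        ring
      rw [setIntegral_congr_fun measurableSet_Ioi (fun z _ => hptw z), integral_smul]
      congr 1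
      have hcomm : ∀ z : ℝ, Complex.exp (-μ * z) • fK z
          = K.mulVec (Complex.exp (-μ * z) • f z) := by
        intro z
        show Complex.exp (-μ * z) • K.mulVec (f z) = _
        rw [Matrix.mulVec_smul]
      rw [setIntegral_congr_fun measurableSet_Ioi (fun z _ => hcomm z)]
      exact ((LinearMap.toContinuousLinearMap K.mulVecLin).integral_comp_comm
        (srgIntOn f hf hfc _ (by fun_prop) _))
    rw [hu t, integral_add hintH hintR, step1, step2, srgSplit μ f hf hfc t ht, hgdef]
    module
  -- derivative of g
  have hgd : ∀ t : ℝ, HasDerivAt g (g1 t) t := by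
    intro t
    have hEneg : HasDerivAt (fun t : ℝ => Complex.exp (-μ * t))
        (-μ * Complex.exp (-μ * t)) t := srgExpDeriv (-μ) t
    have hEpos : HasDerivAt (fun t : ℝ => Complex.exp (μ * t))
        (μ * Complex.exp (μ * t)) t := srgExpDeriv μ t
    have hA : HasDerivAt av (Complex.exp (μ * t) • f t) t :=
      srgFTC f hf _ (by fun_prop) t
    have hB : HasDerivAt (fun t => Cv - bv t) (-(Complex.exp (-μ * t) • f t)) t :=
      (srgFTC f hf _ (by fun_prop) t).const_sub Cv
    have hD := (((hEneg.smul hA).add (hEpos.smul hB)).add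
        (hEneg.smul_const Cv)).const_smul cH |>.add ((hEneg.const_mul cR).smul_const KC)
    have heq : HasDerivAt g (cH • (Complex.exp (-μ * t) • (Complex.exp (μ * t) • f t)
        + (-μ * Complex.exp (-μ * t)) • av t
        + (Complex.exp (μ * t) • -(Complex.exp (-μ * t) • f t)
          + (μ * Complex.exp (μ * t)) • (Cv - bv t))
        + (-μ * Complex.exp (-μ * t)) • Cv)
        + (cR * (-μ * Complex.exp (-μ * t))) • KC) t := hD
    have hvec : cH • (Complex.exp (-μ * t) • (Complex.exp (μ * t) • f t)
        + (-μ * Complex.exp (-μ * t)) • av t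
        + (Complex.exp (μ * t) • -(Complex.exp (-μ * t) • f t)
          + (μ * Complex.exp (μ * t)) • (Cv - bv t))
        + (-μ * Complex.exp (-μ * t)) • Cv)
        + (cR * (-μ * Complex.exp (-μ * t))) • KC = g1 t := by
      rw [hg1def]
      module
    exact hvec ▸ heq
  -- derivative of g1
  have hgd2 : ∀ t : ℝ, HasDerivAt g1 (g2 t) t := by
    intro t
    have hEneg : HasDerivAt (fun t : ℝ => Complex.exp (-μ * t))
        (-μ * Complex.exp (-μ * t)) t := srgExpDeriv (-μ) t
    have hEpos : HasDerivAt (fun t : ℝ => Complex.exp (μ * t))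
        (μ * Complex.exp (μ * t)) t := srgExpDeriv μ t
    have hA : HasDerivAt av (Complex.exp (μ * t) • f t) t :=
      srgFTC f hf _ (by fun_prop) t
    have hB : HasDerivAt (fun t => Cv - bv t) (-(Complex.exp (-μ * t) • f t)) t :=
      (srgFTC f hf _ (by fun_prop) t).const_sub Cv
    have hD := ((((hEneg.const_mul (-μ)).smul hA).add
        ((hEpos.const_mul μ).smul hB)).add
        ((hEneg.const_mul (-μ)).smul_const Cv)).const_smul cH |>.add
        ((hEneg.const_mul (-μ * cR)).smul_const KC)
    have heq : HasDerivAt g1 (cH • ((-μ * Complex.exp (-μ * t)) • (Complex.exp (μ * t) • f t)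
        + (-μ * (-μ * Complex.exp (-μ * t))) • av t
        + ((μ * Complex.exp (μ * t)) • -(Complex.exp (-μ * t) • f t)
          + (μ * (μ * Complex.exp (μ * t))) • (Cv - bv t))
        + (-μ * (-μ * Complex.exp (-μ * t))) • Cv)
        + (-μ * cR * (-μ * Complex.exp (-μ * t))) • KC) t := hD
    have key : Complex.exp (-μ * t) * Complex.exp (μ * t) = 1 := by
      rw [← Complex.exp_add, show -μ * (t:ℂ) + μ * t = 0 by ring, Complex.exp_zero]
    have e1 : (-μ * Complex.exp (-μ * t)) • (Complex.exp (μ * t) • f t) = (-μ) • f t := by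
      rw [smul_smul, show -μ * Complex.exp (-μ * t) * Complex.exp (μ * t)
        = -μ * (Complex.exp (-μ * t) * Complex.exp (μ * t)) by ring, key, mul_one]
    have e2 : (μ * Complex.exp (μ * t)) • -(Complex.exp (-μ * t) • f t) = (-μ) • f t := by
      rw [smul_neg, smul_smul, show μ * Complex.exp (μ * t) * Complex.exp (-μ * t)
        = μ * (Complex.exp (-μ * t) * Complex.exp (μ * t)) by ring, key, mul_one, ← neg_smul]
    have hco : cH * (-μ) + cH * (-μ) = -(ν:ℂ)⁻¹ := by
      rw [hcHdef]
      field_simp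
      ring
    have hcHμ : cH • ((-μ) • f t + (-μ) • f t) = -((ν:ℂ)⁻¹ • f t) := by
      rw [smul_add, smul_smul, ← add_smul, hco, neg_smul]
    have hvec : cH • ((-μ * Complex.exp (-μ * t)) • (Complex.exp (μ * t) • f t)
        + (-μ * (-μ * Complex.exp (-μ * t))) • av t
        + ((μ * Complex.exp (μ * t)) • -(Complex.exp (-μ * t) • f t)
          + (μ * (μ * Complex.exp (μ * t))) • (Cv - bv t))
        + (-μ * (-μ * Complex.exp (-μ * t))) • Cv)
        + (-μ * cR * (-μ * Complex.exp (-μ * t))) • KC = g2 t := by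
      rw [hg2def]
      simp only
      rw [hgdef]
      simp only
      rw [e1, e2]
      have expand : cH • ((-μ) • f t
          + (-μ * (-μ * Complex.exp (-μ * t))) • av t
          + ((-μ) • f t + (μ * (μ * Complex.exp (μ * t))) • (Cv - bv t))
          + (-μ * (-μ * Complex.exp (-μ * t))) • Cv)
          + (-μ * cR * (-μ * Complex.exp (-μ * t))) • KC
          = μ ^ 2 • (cH • (Complex.exp (-μ * t) • av t
              + Complex.exp (μ * t) • (Cv - bv t) + Complex.exp (-μ * t) • Cv)
              + (cR * Complex.exp (-μ * t)) • KC)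
            + cH • ((-μ) • f t + (-μ) • f t) := by
        module
      rw [expand, hcHμ]
      abel
    exact hvec ▸ heq
  constructor
  · intro y hy
    have hy' : (0:ℝ) < y := hy
    have hmem : Ioi (0:ℝ) ∈ nhds y := Ioi_mem_nhds hy'
    have hequ : u =ᶠ[nhds y] g :=
      Filter.eventuallyEq_of_mem hmem fun x hx => hug x (le_of_lt hx)
    have hu1 : HasDerivAt u (g1 y) y := (hgd y).congr_of_eventuallyEq hequ
    have hderiv : ∀ x ∈ Ioi (0:ℝ), deriv u x = g1 x := by
      intro x hx
      have hx' : (0:ℝ) < x := hx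
      have hequ' : u =ᶠ[nhds x] g :=
        Filter.eventuallyEq_of_mem (Ioi_mem_nhds hx') fun z hz => hug z (le_of_lt hz)
      exact ((hgd x).congr_of_eventuallyEq hequ').deriv
    have hderiv' : deriv u =ᶠ[nhds y] g1 := Filter.eventuallyEq_of_mem hmem hderiv
    have hu2 : HasDerivAt (deriv u) (g2 y) y := (hgd2 y).congr_of_eventuallyEq hderiv'
    refine ⟨hu1.differentiableAt, hu2.differentiableAt, ?_⟩
    rw [hu2.deriv, hug y (le_of_lt hy'), hg2def]
    simp only
    funext i
    simp only [Pi.smul_apply, Pi.sub_apply, smul_eq_mul]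
    rw [hlam]
    field_simp
    ring
  · have hueq : derivWithin u (Ici 0) 0 = g1 0 := by
      rw [derivWithin_congr (fun x (hx : x ∈ Ici (0:ℝ)) => hug x hx) (hug 0 le_rfl)]
      exact ((hgd 0).hasDerivWithinAt).derivWithin (uniqueDiffOn_Ici 0 0 self_mem_Ici)
    rw [hueq, hug 0 le_rfl, hg1def, hgdef]
    simp only
    have hz : -μ * ((0:ℝ):ℂ) = 0 := by push_cast; ring
    have hz' : μ * ((0:ℝ):ℂ) = 0 := by push_cast; ring
    rw [hz, hz', Complex.exp_zero]
    have ha0 : av 0 = 0 := by rw [havdef]; simp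
    have hb0 : bv 0 = 0 := by rw [hbvdef]; simp
    rw [ha0, hb0]
    have hKC0 : ∀ i : Fin 2, KC i
        = (s:ℂ)^2 * Cv i - ((ξ₁:ℂ) * Cv 0 + (ξ₂:ℂ) * Cv 1) * ![(ξ₁:ℂ), (ξ₂:ℂ)] i := by
      intro i
      rw [hKCdef, hK]
      fin_cases i
      · simp [Matrix.mulVec, dotProduct, Fin.sum_univ_two, Matrix.vecHead, Matrix.vecTail,
          Fin.zero_eta, Fin.mk_one, Matrix.cons_val', Matrix.cons_val_fin_one, Matrix.empty_val',
          Matrix.cons_val_zero, Matrix.cons_val_one, Matrix.head_cons, Matrix.of_apply]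
        push_cast
        linear_combination (-(Cv 0)) * hsq2
      · simp [Matrix.mulVec, dotProduct, Fin.sum_univ_two, Matrix.vecHead, Matrix.vecTail,
          Fin.zero_eta, Fin.mk_one, Matrix.cons_val', Matrix.cons_val_fin_one, Matrix.empty_val',
          Matrix.cons_val_zero, Matrix.cons_val_one, Matrix.head_cons, Matrix.of_apply]
        push_cast
        linear_combination (-(Cv 1)) * hsq2
    have hkey' : (μ - (s:ℂ)) * cR * s = 2 * cH := by
      rw [hcRdef, hcHdef, hlam, ← hsq]
      have hd : (ν:ℂ) * μ ^ 2 - (ν:ℂ) * (s:ℂ) ^ 2 ≠ 0 := by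
        have hfac : (ν:ℂ) * μ ^ 2 - (ν:ℂ) * (s:ℂ) ^ 2 = (ν:ℂ) * ((μ - s) * (μ + s)) := by ring
        rw [hfac]
        exact mul_ne_zero hν0 (mul_ne_zero hμs hμps)
      have hd2 : μ ^ 2 - (s:ℂ) ^ 2 ≠ 0 := by
        rw [show μ ^ 2 - (s:ℂ) ^ 2 = (μ - s) * (μ + s) by ring]
        exact mul_ne_zero hμs hμps
      field_simp
      ring
    have final : ∀ X Y : Fin 2 → ℂ, Y = (s:ℂ) • X → -X + ((s:ℂ))⁻¹ • Y = 0 := by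
      intro X Y h
      rw [h, inv_smul_smul₀ hsne, neg_add_cancel]
    refine final _ _ ?_
    funext i
    simp only [Pi.add_apply, Pi.neg_apply, Pi.smul_apply, Pi.sub_apply, Pi.zero_apply,
      smul_eq_mul, hKC0, smul_zero, sub_zero, one_mul, mul_one]
    fin_cases i
    · simp [Matrix.cons_val_zero, Matrix.cons_val_one, Matrix.head_cons]
      linear_combination (cR * ((ξ₁:ℂ) * Cv 0 + (ξ₂:ℂ) * Cv 1) * (ξ₁:ℂ)) * hsq2
        + ((s:ℂ)^2 * Cv 0 - ((ξ₁:ℂ) * Cv 0 + (ξ₂:ℂ) * Cv 1) * (ξ₁:ℂ)) * hkey'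
    · simp [Matrix.cons_val_zero, Matrix.cons_val_one, Matrix.head_cons]
      linear_combination (cR * ((ξ₁:ℂ) * Cv 0 + (ξ₂:ℂ) * Cv 1) * (ξ₂:ℂ)) * hsq2
        + ((s:ℂ)^2 * Cv 1 - ((ξ₁:ℂ) * Cv 0 + (ξ₂:ℂ) * Cv 1) * (ξ₂:ℂ)) * hkey'
end
end

section
/- Let ν > 0, let ξ = (ξ₁, ξ₂) ∈ ℝ² be nonzero, and let T > 0. Let ω : [0,T] × [0,∞) → ℂ² be continuous, with ∂_t ω, ∂_z ω, ∂_z² ω existing and continuous on (0,T] × [0,∞), and suppose: (i) ∂_t ω(t,z) = ν (∂_z² ω(t,z) − |ξ|² ω(t,z)) for all t ∈ (0,T] and z > 0; (ii) for each t ∈ (0,T], the boundary condition −(∂_z ω(t,0) + |ξ| ω(t,0)) + |ξ|⁻¹ (ξ₁ ω₁(t,0) + ξ₂ ω₂(t,0)) (ξ₁, ξ₂) = 0 holds; (iii) ω(0,z) = 0 for all z ≥ 0; (iv) there is a square-integrable function g on (0,∞) such that |ω(t,z)| ≤ g(z) and |∂_t ω(t,z)| ≤ g(z) for all (t,z), and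 for each t ∈ (0,T] the function z ↦ ∂_z ω(t,z) is square-integrable on (0,∞) and ∂_z ω(t,z)·conj(ω(t,z)) → 0 as z → ∞. Then ω(t,z) = 0 for all (t,z) ∈ [0,T] × [0,∞). -/
open MeasureTheory Set Complex Filter

noncomputable section

lemma svu_hasDerivWithinAt_absSq {u : ℝ → ℂ} {u' : ℂ} {s : Set ℝ} {x : ℝ}
    (hu : HasDerivWithinAt u u' s x) :
    HasDerivWithinAt (fun y => ‖u y‖ ^ 2)
      (2 * (u'.re * (u x).re + u'.im * (u x).im)) s x := by
  have hre : HasDerivWithinAt (fun y => (u y).re) u'.re s x :=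
    (Complex.reCLM.hasFDerivAt.comp_hasDerivWithinAt x hu)
  have him : HasDerivWithinAt (fun y => (u y).im) u'.im s x :=
    (Complex.imCLM.hasFDerivAt.comp_hasDerivWithinAt x hu)
  have h : HasDerivWithinAt (fun y => (u y).re * (u y).re + (u y).im * (u y).im)
      (u'.re * (u x).re + (u x).re * u'.re + (u'.im * (u x).im + (u x).im * u'.im)) s x :=
    (hre.mul hre).add (him.mul him)
  have heq : (fun y => ‖u y‖ ^ 2)
      = fun y => (u y).re * (u y).re + (u y).im * (u y).im := by
    funext y; rw [Complex.sq_norm, Complex.normSq_apply]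
  rw [heq]
  convert h using 1; ring

lemma svu_hasDerivAt_absSq {u : ℝ → ℂ} {u' : ℂ} {x : ℝ}
    (hu : HasDerivAt u u' x) :
    HasDerivAt (fun y => ‖u y‖ ^ 2)
      (2 * (u'.re * (u x).re + u'.im * (u x).im)) x := by
  rw [← hasDerivWithinAt_univ] at hu ⊢
  exact svu_hasDerivWithinAt_absSq hu

lemma svu_cauchy4 (a b c d : ℂ) :
    |a.re * b.re + a.im * b.im + (c.re * d.re + c.im * d.im)|
      ≤ Real.sqrt (‖a‖ ^ 2 + ‖c‖ ^ 2) *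
        Real.sqrt (‖b‖ ^ 2 + ‖d‖ ^ 2) := by
  rw [← Real.sqrt_mul (by positivity)]
  apply Real.abs_le_sqrt
  have h1 : ‖a‖ ^ 2 = a.re ^ 2 + a.im ^ 2 := by
    rw [Complex.sq_norm, Complex.normSq_apply]; ring
  have h2 : ‖b‖ ^ 2 = b.re ^ 2 + b.im ^ 2 := by
    rw [Complex.sq_norm, Complex.normSq_apply]; ring
  have h3 : ‖c‖ ^ 2 = c.re ^ 2 + c.im ^ 2 := by
    rw [Complex.sq_norm, Complex.normSq_apply]; ring
  have h4 : ‖d‖ ^ 2 = d.re ^ 2 + d.im ^ 2 := by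
    rw [Complex.sq_norm, Complex.normSq_apply]; ring
  rw [h1, h2, h3, h4]
  nlinarith [sq_nonneg (a.re * b.im - a.im * b.re), sq_nonneg (a.re * d.re - c.re * b.re),
    sq_nonneg (a.re * d.im - c.im * b.re), sq_nonneg (a.im * d.re - c.re * b.im),
    sq_nonneg (a.im * d.im - c.im * b.im), sq_nonneg (c.re * d.im - c.im * d.re)]

lemma svu_limit_zero {A : ℝ → ℝ} {L : ℝ}
    (hint : IntegrableOn A (Ioi (0 : ℝ)))
    (hpos : ∀ z, 0 < z → 0 ≤ A z)
    (htend : Tendsto A atTop (nhds L)) : L = 0 := by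
  by_contra hL
  have hL0 : 0 ≤ L := ge_of_tendsto htend ((eventually_gt_atTop 0).mono fun z hz => hpos z hz)
  have hLpos : 0 < L := lt_of_le_of_ne hL0 (Ne.symm hL)
  have hev : ∀ᶠ z in atTop, L / 2 ≤ A z := by
    filter_upwards [htend.eventually (eventually_ge_nhds (by linarith : L / 2 < L))] with z hz
    exact hz
  obtain ⟨M, hM⟩ := hev.exists_forall_of_atTop
  set M' := max M 1 with hM'
  have hsub : Ioi M' ⊆ Ioi (0:ℝ) := fun z hz => show (0:ℝ) < z from lt_of_lt_of_le (by positivity : (0:ℝ) < max M 1) (le_of_lt (show M' < z from hz))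
  have hintM : IntegrableOn A (Ioi M') := hint.mono_set hsub
  have hconst : IntegrableOn (fun _ : ℝ => L / 2) (Ioi M') := by
    refine hintM.mono' aestronglyMeasurable_const ?_
    filter_upwards [ae_restrict_mem measurableSet_Ioi] with z hz
    rw [Real.norm_eq_abs, _root_.abs_of_nonneg (by linarith)]
    exact hM z (le_trans (le_max_left M 1) (le_of_lt hz))
  rw [integrableOn_const_iff] at hconst
  rcases hconst with h | h
  · exact (by linarith : L / 2 ≠ 0) (enorm_eq_zero.mp h)
  · simp [Real.volume_Ioi] at h

lemma svu_re_mul_conj (a b : ℂ) :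
    (a * (starRingEnd ℂ) b).re = a.re * b.re + a.im * b.im := by
  simp [Complex.mul_re]

set_option maxHeartbeats 3200000 in
/-- Uniqueness for the homogeneous Stokes vorticity system at fixed tangential frequency ξ
on the half-line: a solution of the heat equation ∂_t ω = ν(∂_z² - |ξ|²)ω with the vorticity
boundary condition, zero initial data, and suitable integrability vanishes identically. -/
theorem stokes_vorticity_uniqueness
    (ν : ℝ) (hν : 0 < ν) (ξ₁ ξ₂ : ℝ) (hξ : (ξ₁, ξ₂) ≠ (0, 0))
    (T : ℝ) (hT : 0 < T)
    (ω ωt ωz ωzz : ℝ → ℝ → Fin 2 → ℂ)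
    (hcont : ContinuousOn (fun p : ℝ × ℝ => ω p.1 p.2) (Icc 0 T ×ˢ Ici 0))
    (hdt : ∀ t ∈ Ioc 0 T, ∀ z ∈ Ici (0 : ℝ),
      HasDerivWithinAt (fun s => ω s z) (ωt t z) (Icc 0 T) t)
    (hdz : ∀ t ∈ Ioc 0 T, ∀ z ∈ Ici (0 : ℝ),
      HasDerivWithinAt (fun w => ω t w) (ωz t z) (Ici 0) z)
    (hdzz : ∀ t ∈ Ioc 0 T, ∀ z ∈ Ici (0 : ℝ),
      HasDerivWithinAt (fun w => ωz t w) (ωzz t z) (Ici 0) z)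
    (hct : ContinuousOn (fun p : ℝ × ℝ => ωt p.1 p.2) (Ioc 0 T ×ˢ Ici 0))
    (hcz : ContinuousOn (fun p : ℝ × ℝ => ωz p.1 p.2) (Ioc 0 T ×ˢ Ici 0))
    (hczz : ContinuousOn (fun p : ℝ × ℝ => ωzz p.1 p.2) (Ioc 0 T ×ˢ Ici 0))
    -- (i) the heat equation ∂_t ω = ν (∂_z² ω - |ξ|² ω)
    (heq : ∀ t ∈ Ioc 0 T, ∀ z ∈ Ioi (0 : ℝ),
      ωt t z = (ν : ℂ) • (ωzz t z - ((ξ₁ ^ 2 + ξ₂ ^ 2 : ℝ) : ℂ) • ω t z))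
    -- (ii) the vorticity boundary condition
    (hbc : ∀ t ∈ Ioc 0 T,
      -(ωz t 0 + ((Real.sqrt (ξ₁ ^ 2 + ξ₂ ^ 2) : ℝ) : ℂ) • ω t 0)
        + (((Real.sqrt (ξ₁ ^ 2 + ξ₂ ^ 2) : ℝ) : ℂ))⁻¹ •
          (((ξ₁ : ℂ) * ω t 0 0 + (ξ₂ : ℂ) * ω t 0 1) • ![(ξ₁ : ℂ), (ξ₂ : ℂ)]) = 0)
    -- (iii) zero initial data
    (hinit : ∀ z ∈ Ici (0 : ℝ), ω 0 z = 0)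
    -- (iv) integrability and decay
    (g : ℝ → ℝ)
    (hg : IntegrableOn (fun z => g z ^ 2) (Ioi 0))
    (hb1 : ∀ t ∈ Icc 0 T, ∀ z ∈ Ici (0 : ℝ),
      Real.sqrt (‖ω t z 0‖ ^ 2 + ‖ω t z 1‖ ^ 2) ≤ g z)
    (hb2 : ∀ t ∈ Ioc 0 T, ∀ z ∈ Ici (0 : ℝ),
      Real.sqrt (‖ωt t z 0‖ ^ 2 + ‖ωt t z 1‖ ^ 2) ≤ g z)
    (hb3 : ∀ t ∈ Ioc 0 T,
      IntegrableOn (fun z => ‖ωz t z 0‖ ^ 2 + ‖ωz t z 1‖ ^ 2) (Ioi 0))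
    (hb4 : ∀ t ∈ Ioc 0 T,
      Tendsto (fun z => ωz t z 0 * (starRingEnd ℂ) (ω t z 0)
        + ωz t z 1 * (starRingEnd ℂ) (ω t z 1)) atTop (nhds 0)) :
    ∀ t ∈ Icc 0 T, ∀ z ∈ Ici (0 : ℝ), ω t z = 0 := by
  have hξsq : 0 < ξ₁ ^ 2 + ξ₂ ^ 2 := by
    have h : ξ₁ ≠ 0 ∨ ξ₂ ≠ 0 := by
      by_contra h; push_neg at h; exact hξ (by simp [h.1, h.2])
    rcases h with h | h <;> positivity
  set k := Real.sqrt (ξ₁ ^ 2 + ξ₂ ^ 2) with hkdef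
  have hk : 0 < k := Real.sqrt_pos.mpr hξsq
  have hk2 : k ^ 2 = ξ₁ ^ 2 + ξ₂ ^ 2 := Real.sq_sqrt hξsq.le
  -- slice continuity
  have hslice : ∀ t ∈ Icc (0:ℝ) T, ContinuousOn (fun z => ω t z) (Ici 0) := by
    intro t ht
    have : ContinuousOn ((fun p : ℝ × ℝ => ω p.1 p.2) ∘ (fun z : ℝ => (t, z))) (Ici 0) :=
      hcont.comp (Continuous.continuousOn (by fun_prop)) (fun z hz => ⟨ht, hz⟩)
    exact this
  have htslice : ∀ z ∈ Ici (0:ℝ), ContinuousOn (fun s => ω s z) (Icc 0 T) := by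
    intro z hz
    have : ContinuousOn ((fun p : ℝ × ℝ => ω p.1 p.2) ∘ (fun s : ℝ => (s, z))) (Icc 0 T) :=
      hcont.comp (Continuous.continuousOn (by fun_prop)) (fun s hs => ⟨hs, hz⟩)
    exact this
  have hzslice : ∀ t ∈ Ioc (0:ℝ) T, ContinuousOn (fun z => ωz t z) (Ici 0) := by
    intro t ht
    have : ContinuousOn ((fun p : ℝ × ℝ => ωz p.1 p.2) ∘ (fun z : ℝ => (t, z))) (Ici 0) :=
      hcz.comp (Continuous.continuousOn (by fun_prop)) (fun z hz => ⟨ht, hz⟩)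
    exact this
  have htsliceT : ∀ t ∈ Ioc (0:ℝ) T, ContinuousOn (fun z => ωt t z) (Ici 0) := by
    intro t ht
    have : ContinuousOn ((fun p : ℝ × ℝ => ωt p.1 p.2) ∘ (fun z : ℝ => (t, z))) (Ici 0) :=
      hct.comp (Continuous.continuousOn (by fun_prop)) (fun z hz => ⟨ht, hz⟩)
    exact this
  -- the energy density and energy
  set f : ℝ → ℝ → ℝ := fun t z => ‖ω t z 0‖ ^ 2 + ‖ω t z 1‖ ^ 2
    with hfdef
  have hf_nonneg : ∀ t z, 0 ≤ f t z := by intro t z; positivity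
  have hf_le : ∀ t ∈ Icc (0:ℝ) T, ∀ z ∈ Ici (0:ℝ), f t z ≤ g z ^ 2 := by
    intro t ht z hz
    have h1 := hb1 t ht z hz
    have h0 := hf_nonneg t z
    nlinarith [Real.sq_sqrt h0, Real.sqrt_nonneg (f t z)]
  have hg_nonneg : ∀ z ∈ Ici (0:ℝ), 0 ≤ g z := by
    intro z hz
    exact le_trans (Real.sqrt_nonneg _) (hb1 0 ⟨le_refl 0, hT.le⟩ z hz)
  have hf_contz : ∀ t ∈ Icc (0:ℝ) T, ContinuousOn (f t) (Ici 0) := by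
    intro t ht
    have h0 : ContinuousOn (fun z => ω t z 0) (Ici 0) :=
      (continuous_apply (0 : Fin 2)).comp_continuousOn (hslice t ht)
    have h1 : ContinuousOn (fun z => ω t z 1) (Ici 0) :=
      (continuous_apply (1 : Fin 2)).comp_continuousOn (hslice t ht)
    exact ((continuous_norm.comp_continuousOn h0).pow 2).add
      ((continuous_norm.comp_continuousOn h1).pow 2)
  have hf_meas : ∀ t ∈ Icc (0:ℝ) T,
      AEStronglyMeasurable (f t) (volume.restrict (Ioi 0)) := by
    intro t ht
    exact ((hf_contz t ht).mono Ioi_subset_Ici_self).aestronglyMeasurable measurableSet_Ioi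
  have hf_int : ∀ t ∈ Icc (0:ℝ) T, IntegrableOn (f t) (Ioi 0) := by
    intro t ht
    refine hg.mono' (hf_meas t ht) ?_
    filter_upwards [ae_restrict_mem measurableSet_Ioi] with z hz
    rw [Real.norm_eq_abs, _root_.abs_of_nonneg (hf_nonneg t z)]
    exact hf_le t ht z (Ioi_subset_Ici_self hz)
  set E : ℝ → ℝ := fun t => ∫ z in Ioi 0, f t z with hEdef
  have hE_nonneg : ∀ t, 0 ≤ E t := fun t =>
    setIntegral_nonneg measurableSet_Ioi (fun z _ => hf_nonneg t z)
  have hE0 : E 0 = 0 := by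
    have heq0 : ∀ z ∈ Ioi (0:ℝ), f 0 z = 0 := by
      intro z hz
      simp [hfdef, hinit z (Ioi_subset_Ici_self hz)]
    calc E 0 = ∫ z in Ioi (0:ℝ), (0:ℝ) := setIntegral_congr_fun measurableSet_Ioi heq0
    _ = 0 := by simp
  have hEcont : ContinuousOn E (Icc 0 T) := by
    intro t ht
    apply continuousWithinAt_of_dominated (bound := fun z => g z ^ 2)
    · filter_upwards [self_mem_nhdsWithin] with s hs using hf_meas s hs
    · filter_upwards [self_mem_nhdsWithin] with s hs
      filter_upwards [ae_restrict_mem measurableSet_Ioi] with z hz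
      rw [Real.norm_eq_abs, _root_.abs_of_nonneg (hf_nonneg s z)]
      exact hf_le s hs z (Ioi_subset_Ici_self hz)
    · exact hg
    · filter_upwards [ae_restrict_mem measurableSet_Ioi] with z hz
      have h0 : ContinuousOn (fun s => ω s z 0) (Icc 0 T) :=
        (continuous_apply (0 : Fin 2)).comp_continuousOn (htslice z (Ioi_subset_Ici_self hz))
      have h1 : ContinuousOn (fun s => ω s z 1) (Icc 0 T) :=
        (continuous_apply (1 : Fin 2)).comp_continuousOn (htslice z (Ioi_subset_Ici_self hz))
      exact (((continuous_norm.comp_continuousOn h0).pow 2).add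
        ((continuous_norm.comp_continuousOn h1).pow 2)) t ht
  -- the derivative integrand
  set R : ℝ → ℝ → ℝ := fun t z =>
    (ωt t z 0).re * (ω t z 0).re + (ωt t z 0).im * (ω t z 0).im
      + ((ωt t z 1).re * (ω t z 1).re + (ωt t z 1).im * (ω t z 1).im) with hRdef
  -- differentiation under the integral sign
  have hEd : ∀ t ∈ Ioo (0:ℝ) T, HasDerivAt E (∫ z in Ioi 0, 2 * R t z) t := by
    intro t ht
    obtain ⟨ht0, htT⟩ := ht
    have htIcc : t ∈ Icc (0:ℝ) T := ⟨ht0.le, htT.le⟩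
    have htIoc : t ∈ Ioc (0:ℝ) T := ⟨ht0, htT.le⟩
    set ε := min t (T - t) with hεdef
    have hε0 : 0 < ε := lt_min ht0 (by linarith)
    have hballs : Metric.ball t ε ⊆ Ioo 0 T := by
      intro s hs
      rw [Metric.mem_ball, Real.dist_eq] at hs
      rcases abs_lt.mp hs with ⟨hl, hr⟩
      have h1 : ε ≤ t := min_le_left _ _
      have h2 : ε ≤ T - t := min_le_right _ _
      exact ⟨by linarith, by linarith⟩
    have hmeasR : AEStronglyMeasurable (fun z => 2 * R t z) (volume.restrict (Ioi 0)) := by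
      have hω0 : ContinuousOn (fun z => ω t z 0) (Ici 0) :=
        (continuous_apply _).comp_continuousOn (hslice t htIcc)
      have hω1 : ContinuousOn (fun z => ω t z 1) (Ici 0) :=
        (continuous_apply _).comp_continuousOn (hslice t htIcc)
      have hτ0 : ContinuousOn (fun z => ωt t z 0) (Ici 0) :=
        (continuous_apply _).comp_continuousOn (htsliceT t htIoc)
      have hτ1 : ContinuousOn (fun z => ωt t z 1) (Ici 0) :=
        (continuous_apply _).comp_continuousOn (htsliceT t htIoc)
      have hcR : ContinuousOn (fun z => 2 * R t z) (Ici 0) := by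
        simp only [hRdef]
        exact continuousOn_const.mul
          ((((Complex.continuous_re.comp_continuousOn hτ0).mul
              (Complex.continuous_re.comp_continuousOn hω0)).add
            ((Complex.continuous_im.comp_continuousOn hτ0).mul
              (Complex.continuous_im.comp_continuousOn hω0))).add
          (((Complex.continuous_re.comp_continuousOn hτ1).mul
              (Complex.continuous_re.comp_continuousOn hω1)).add
            ((Complex.continuous_im.comp_continuousOn hτ1).mul
              (Complex.continuous_im.comp_continuousOn hω1))))
      exact (hcR.mono Ioi_subset_Ici_self).aestronglyMeasurable measurableSet_Ioi
    have key := hasDerivAt_integral_of_dominated_loc_of_deriv_le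
      (μ := volume.restrict (Ioi 0)) (F := fun s z => f s z) (F' := fun s z => 2 * R s z)
      (bound := fun z => 2 * g z ^ 2) (Metric.ball_mem_nhds t hε0) ?_ (hf_int t htIcc) hmeasR ?_ ?_ ?_
    · exact key.2
    · filter_upwards [Ioo_mem_nhds ht0 htT] with s hs using hf_meas s (Ioo_subset_Icc_self hs)
    · filter_upwards [ae_restrict_mem measurableSet_Ioi] with z hz
      intro s hs
      have hsIoo := hballs hs
      have hsIcc : s ∈ Icc (0:ℝ) T := Ioo_subset_Icc_self hsIoo
      have hsIoc : s ∈ Ioc (0:ℝ) T := ⟨hsIoo.1, hsIoo.2.le⟩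
      have hC := svu_cauchy4 (ωt s z 0) (ω s z 0) (ωt s z 1) (ω s z 1)
      have hzI : z ∈ Ici (0:ℝ) := Ioi_subset_Ici_self hz
      have hRabs : |R s z| ≤ g z * g z := by
        refine le_trans hC (mul_le_mul (hb2 s hsIoc z hzI) (hb1 s hsIcc z hzI)
          (Real.sqrt_nonneg _) (hg_nonneg z hzI))
      rw [Real.norm_eq_abs, abs_mul]
      calc |(2:ℝ)| * |R s z| ≤ 2 * (g z * g z) := by
            rw [(by norm_num : |(2:ℝ)| = 2)]; exact mul_le_mul_of_nonneg_left hRabs (by norm_num)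
        _ = 2 * g z ^ 2 := by ring
    · exact hg.const_mul 2
    · filter_upwards [ae_restrict_mem measurableSet_Ioi] with z hz
      intro s hs
      have hsIoo := hballs hs
      have hder : HasDerivAt (fun s' => ω s' z) (ωt s z) s :=
        (hdt s ⟨hsIoo.1, hsIoo.2.le⟩ z (Ioi_subset_Ici_self hz)).hasDerivAt
          (Icc_mem_nhds hsIoo.1 hsIoo.2)
      have h0 : HasDerivAt (fun s' => ω s' z 0) (ωt s z 0) s :=
        ((ContinuousLinearMap.proj (R := ℝ) (φ := fun _ : Fin 2 => ℂ)
          (0 : Fin 2)).hasFDerivAt.comp_hasDerivAt s hder)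
      have h1 : HasDerivAt (fun s' => ω s' z 1) (ωt s z 1) s :=
        ((ContinuousLinearMap.proj (R := ℝ) (φ := fun _ : Fin 2 => ℂ)
          (1 : Fin 2)).hasFDerivAt.comp_hasDerivAt s hder)
      have hsum := (svu_hasDerivAt_absSq h0).add (svu_hasDerivAt_absSq h1)
      refine HasDerivAt.congr_deriv hsum ?_
      simp only [hRdef]
      ring
  -- the derivative is nonpositive
  have hDle : ∀ t ∈ Ioo (0:ℝ) T, (∫ z in Ioi (0:ℝ), 2 * R t z) ≤ 0 := by
    intro t ht
    have htIoc : t ∈ Ioc (0:ℝ) T := ⟨ht.1, ht.2.le⟩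
    have htIcc : t ∈ Icc (0:ℝ) T := ⟨ht.1.le, ht.2.le⟩
    set Φ : ℝ → ℝ := fun z =>
      (ωz t z 0).re * (ω t z 0).re + (ωz t z 0).im * (ω t z 0).im
        + ((ωz t z 1).re * (ω t z 1).re + (ωz t z 1).im * (ω t z 1).im) with hΦdef
    set Q : ℝ → ℝ := fun z => ‖ωz t z 0‖ ^ 2 + ‖ωz t z 1‖ ^ 2
      with hQdef
    set Ψ : ℝ → ℝ := fun z =>
      (ωzz t z 0).re * (ω t z 0).re + (ωzz t z 0).im * (ω t z 0).im
        + ((ωzz t z 1).re * (ω t z 1).re + (ωzz t z 1).im * (ω t z 1).im) with hΨdef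
    have hω0 : ContinuousOn (fun z => ω t z 0) (Ici 0) :=
      (continuous_apply _).comp_continuousOn (hslice t htIcc)
    have hω1 : ContinuousOn (fun z => ω t z 1) (Ici 0) :=
      (continuous_apply _).comp_continuousOn (hslice t htIcc)
    have hζ0 : ContinuousOn (fun z => ωz t z 0) (Ici 0) :=
      (continuous_apply _).comp_continuousOn (hzslice t htIoc)
    have hζ1 : ContinuousOn (fun z => ωz t z 1) (Ici 0) :=
      (continuous_apply _).comp_continuousOn (hzslice t htIoc)
    have hΦcont : ContinuousOn Φ (Ici 0) := by
      simp only [hΦdef]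
      exact (((Complex.continuous_re.comp_continuousOn hζ0).mul
          (Complex.continuous_re.comp_continuousOn hω0)).add
        ((Complex.continuous_im.comp_continuousOn hζ0).mul
          (Complex.continuous_im.comp_continuousOn hω0))).add
        (((Complex.continuous_re.comp_continuousOn hζ1).mul
          (Complex.continuous_re.comp_continuousOn hω1)).add
        ((Complex.continuous_im.comp_continuousOn hζ1).mul
          (Complex.continuous_im.comp_continuousOn hω1)))
    have hQnonneg : ∀ z, 0 ≤ Q z := fun z => by simp only [hQdef]; positivity
    have hQint : IntegrableOn Q (Ioi 0) := hb3 t htIoc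
    have hfint := hf_int t htIcc
    have hΦbd : ∀ z, |Φ z| ≤ Real.sqrt (Q z) * Real.sqrt (f t z) :=
      fun z => svu_cauchy4 (ωz t z 0) (ω t z 0) (ωz t z 1) (ω t z 1)
    have hΦint : IntegrableOn Φ (Ioi 0) := by
      refine (hQint.add hfint).mono'
        ((hΦcont.mono Ioi_subset_Ici_self).aestronglyMeasurable measurableSet_Ioi) ?_
      filter_upwards [ae_restrict_mem measurableSet_Ioi] with z hz
      rw [Real.norm_eq_abs]
      refine le_trans (hΦbd z) ?_
      show Real.sqrt (Q z) * Real.sqrt (f t z) ≤ Q z + f t z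
      have h1 := Real.sq_sqrt (hQnonneg z)
      have h2 := Real.sq_sqrt (hf_nonneg t z)
      nlinarith [sq_nonneg (Real.sqrt (Q z) - Real.sqrt (f t z)), Real.sqrt_nonneg (Q z),
        Real.sqrt_nonneg (f t z)]
    have hRbd : ∀ z ∈ Ici (0:ℝ), |R t z| ≤ g z ^ 2 := by
      intro z hz
      refine le_trans (svu_cauchy4 (ωt t z 0) (ω t z 0) (ωt t z 1) (ω t z 1)) ?_
      have := mul_le_mul (hb2 t htIoc z hz) (hb1 t htIcc z hz) (Real.sqrt_nonneg _)
        (hg_nonneg z hz)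
      nlinarith
    have hRcont : ContinuousOn (R t) (Ici 0) := by
      have hτ0 : ContinuousOn (fun z => ωt t z 0) (Ici 0) :=
        (continuous_apply _).comp_continuousOn (htsliceT t htIoc)
      have hτ1 : ContinuousOn (fun z => ωt t z 1) (Ici 0) :=
        (continuous_apply _).comp_continuousOn (htsliceT t htIoc)
      simp only [hRdef]
      exact (((Complex.continuous_re.comp_continuousOn hτ0).mul
          (Complex.continuous_re.comp_continuousOn hω0)).add
        ((Complex.continuous_im.comp_continuousOn hτ0).mul
          (Complex.continuous_im.comp_continuousOn hω0))).add
        (((Complex.continuous_re.comp_continuousOn hτ1).mul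
          (Complex.continuous_re.comp_continuousOn hω1)).add
        ((Complex.continuous_im.comp_continuousOn hτ1).mul
          (Complex.continuous_im.comp_continuousOn hω1)))
    have hRint : IntegrableOn (R t) (Ioi 0) := by
      refine hg.mono'
        ((hRcont.mono Ioi_subset_Ici_self).aestronglyMeasurable measurableSet_Ioi) ?_
      filter_upwards [ae_restrict_mem measurableSet_Ioi] with z hz
      rw [Real.norm_eq_abs]
      exact hRbd z (Ioi_subset_Ici_self hz)
    -- heat equation, componentwise and for the real quantities
    have heat : ∀ z ∈ Ioi (0:ℝ), R t z = ν * (Ψ z - (ξ₁ ^ 2 + ξ₂ ^ 2) * f t z) := by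
      intro z hz
      have h := heq t htIoc z hz
      have h0 : ωt t z 0 = (ν:ℂ) * (ωzz t z 0 - ((ξ₁^2+ξ₂^2 : ℝ):ℂ) * ω t z 0) := by
        have := congrFun h 0
        simpa [Pi.smul_apply, smul_eq_mul, Pi.sub_apply] using this
      have h1 : ωt t z 1 = (ν:ℂ) * (ωzz t z 1 - ((ξ₁^2+ξ₂^2 : ℝ):ℂ) * ω t z 1) := by
        have := congrFun h 1
        simpa [Pi.smul_apply, smul_eq_mul, Pi.sub_apply] using this
      simp only [hRdef, hΨdef, hfdef, h0, h1, Complex.mul_re, Complex.mul_im,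
        Complex.sub_re, Complex.sub_im, Complex.ofReal_re, Complex.ofReal_im,
        Complex.sq_norm, Complex.normSq_apply]
      ring
    -- z-derivatives
    have hAd : ∀ z ∈ Ioi (0:ℝ), HasDerivAt (fun w => f t w) (2 * Φ z) z := by
      intro z hz
      have hder : HasDerivAt (fun w => ω t w) (ωz t z) z :=
        (hdz t htIoc z (Ioi_subset_Ici_self hz)).hasDerivAt (Ici_mem_nhds hz)
      have h0 : HasDerivAt (fun w => ω t w 0) (ωz t z 0) z :=
        ((ContinuousLinearMap.proj (R := ℝ) (φ := fun _ : Fin 2 => ℂ)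
          (0 : Fin 2)).hasFDerivAt.comp_hasDerivAt z hder)
      have h1 : HasDerivAt (fun w => ω t w 1) (ωz t z 1) z :=
        ((ContinuousLinearMap.proj (R := ℝ) (φ := fun _ : Fin 2 => ℂ)
          (1 : Fin 2)).hasFDerivAt.comp_hasDerivAt z hder)
      have hsum := (svu_hasDerivAt_absSq h0).add (svu_hasDerivAt_absSq h1)
      refine HasDerivAt.congr_deriv hsum ?_
      simp only [hΦdef]
      ring
    have hΦd : ∀ z ∈ Ioi (0:ℝ), HasDerivAt Φ (Ψ z + Q z) z := by
      intro z hz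
      have hder : HasDerivAt (fun w => ω t w) (ωz t z) z :=
        (hdz t htIoc z (Ioi_subset_Ici_self hz)).hasDerivAt (Ici_mem_nhds hz)
      have hderz : HasDerivAt (fun w => ωz t w) (ωzz t z) z :=
        (hdzz t htIoc z (Ioi_subset_Ici_self hz)).hasDerivAt (Ici_mem_nhds hz)
      have h0 : HasDerivAt (fun w => ω t w 0) (ωz t z 0) z :=
        ((ContinuousLinearMap.proj (R := ℝ) (φ := fun _ : Fin 2 => ℂ)
          (0 : Fin 2)).hasFDerivAt.comp_hasDerivAt z hder)
      have h1 : HasDerivAt (fun w => ω t w 1) (ωz t z 1) z :=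
        ((ContinuousLinearMap.proj (R := ℝ) (φ := fun _ : Fin 2 => ℂ)
          (1 : Fin 2)).hasFDerivAt.comp_hasDerivAt z hder)
      have hz0 : HasDerivAt (fun w => ωz t w 0) (ωzz t z 0) z :=
        ((ContinuousLinearMap.proj (R := ℝ) (φ := fun _ : Fin 2 => ℂ)
          (0 : Fin 2)).hasFDerivAt.comp_hasDerivAt z hderz)
      have hz1 : HasDerivAt (fun w => ωz t w 1) (ωzz t z 1) z :=
        ((ContinuousLinearMap.proj (R := ℝ) (φ := fun _ : Fin 2 => ℂ)
          (1 : Fin 2)).hasFDerivAt.comp_hasDerivAt z hderz)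
      have a0re : HasDerivAt (fun w => (ω t w 0).re) (ωz t z 0).re z :=
        Complex.reCLM.hasFDerivAt.comp_hasDerivAt z h0
      have a0im : HasDerivAt (fun w => (ω t w 0).im) (ωz t z 0).im z :=
        Complex.imCLM.hasFDerivAt.comp_hasDerivAt z h0
      have a1re : HasDerivAt (fun w => (ω t w 1).re) (ωz t z 1).re z :=
        Complex.reCLM.hasFDerivAt.comp_hasDerivAt z h1
      have a1im : HasDerivAt (fun w => (ω t w 1).im) (ωz t z 1).im z :=
        Complex.imCLM.hasFDerivAt.comp_hasDerivAt z h1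
      have b0re : HasDerivAt (fun w => (ωz t w 0).re) (ωzz t z 0).re z :=
        Complex.reCLM.hasFDerivAt.comp_hasDerivAt z hz0
      have b0im : HasDerivAt (fun w => (ωz t w 0).im) (ωzz t z 0).im z :=
        Complex.imCLM.hasFDerivAt.comp_hasDerivAt z hz0
      have b1re : HasDerivAt (fun w => (ωz t w 1).re) (ωzz t z 1).re z :=
        Complex.reCLM.hasFDerivAt.comp_hasDerivAt z hz1
      have b1im : HasDerivAt (fun w => (ωz t w 1).im) (ωzz t z 1).im z :=
        Complex.imCLM.hasFDerivAt.comp_hasDerivAt z hz1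
      have hsum := (((b0re.mul a0re).add (b0im.mul a0im)).add
        ((b1re.mul a1re).add (b1im.mul a1im)))
      refine HasDerivAt.congr_deriv hsum ?_
      simp only [hΨdef, hQdef, Complex.sq_norm, Complex.normSq_apply]
      ring
    -- Ψ is integrable
    have hΨint : IntegrableOn Ψ (Ioi 0) := by
      have hcomb : IntegrableOn (fun z => ν⁻¹ * R t z + (ξ₁^2+ξ₂^2) * f t z) (Ioi 0) :=
        (hRint.const_mul _).add (hfint.const_mul _)
      refine hcomb.congr_fun ?_ measurableSet_Ioi
      intro z hz
      show ν⁻¹ * R t z + (ξ₁^2+ξ₂^2) * f t z = Ψ z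
      rw [heat z hz]
      field_simp
      ring
    have hΨQint : IntegrableOn (fun z => Ψ z + Q z) (Ioi 0) := hΨint.add hQint
    -- boundary limits
    have hΦtend : Tendsto Φ atTop (nhds 0) := by
      have h2 : Tendsto (fun z => (ωz t z 0 * (starRingEnd ℂ) (ω t z 0)
          + ωz t z 1 * (starRingEnd ℂ) (ω t z 1)).re) atTop (nhds 0) := by
        have h3 := (Complex.continuous_re.tendsto (0:ℂ)).comp (hb4 t htIoc)
        simp only [Function.comp_def, Complex.zero_re] at h3
        exact h3
      refine Tendsto.congr (fun z => ?_) h2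
      simp only [Complex.add_re, svu_re_mul_conj, hΦdef]
    have h2Φint : IntegrableOn (fun z => 2 * Φ z) (Ioi 0) := hΦint.const_mul 2
    have hftendL : Tendsto (fun z => f t z) atTop
        (nhds (f t 1 + ∫ z in Ioi 1, 2 * Φ z)) := by
      have hIoi1 : IntegrableOn (fun z => 2 * Φ z) (Ioi 1) :=
        h2Φint.mono_set (fun z hz => mem_Ioi.mpr (lt_trans one_pos hz))
      have hmain := intervalIntegral_tendsto_integral_Ioi 1 hIoi1 tendsto_id
      have hT2 : Tendsto (fun x => f t 1 + ∫ z in (1:ℝ)..x, 2 * Φ z) atTop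
          (nhds (f t 1 + ∫ z in Ioi 1, 2 * Φ z)) := tendsto_const_nhds.add hmain
      refine hT2.congr' ?_
      filter_upwards [eventually_ge_atTop (1:ℝ)] with x hx
      have hFTC : ∫ z in (1:ℝ)..x, 2 * Φ z = f t x - f t 1 := by
        apply intervalIntegral.integral_eq_sub_of_hasDerivAt
        · intro w hw
          rw [uIcc_of_le hx] at hw
          exact hAd w (lt_of_lt_of_le one_pos hw.1)
        · rw [intervalIntegrable_iff_integrableOn_Ioc_of_le hx]
          exact h2Φint.mono_set (fun z hz => mem_Ioi.mpr (lt_trans one_pos hz.1))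
      rw [hFTC]
      ring
    have hL0 : f t 1 + (∫ z in Ioi 1, 2 * Φ z) = 0 :=
      svu_limit_zero hfint (fun z _ => hf_nonneg t z) hftendL
    have hftend0 : Tendsto (fun z => f t z) atTop (nhds 0) := hL0 ▸ hftendL
    -- improper FTC on (0, ∞)
    have hfcw : ContinuousWithinAt (fun w => f t w) (Ici 0) 0 :=
      (hf_contz t htIcc) 0 self_mem_Ici
    have hI2 : ∫ z in Ioi 0, 2 * Φ z = 0 - f t 0 :=
      integral_Ioi_of_hasDerivAt_of_tendsto hfcw hAd h2Φint hftend0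
    have hΦcw : ContinuousWithinAt Φ (Ici 0) 0 := hΦcont 0 self_mem_Ici
    have hI1 : ∫ z in Ioi 0, (Ψ z + Q z) = 0 - Φ 0 :=
      integral_Ioi_of_hasDerivAt_of_tendsto hΦcw hΦd hΨQint hΦtend
    have hsplit : ∫ z in Ioi (0:ℝ), (Ψ z + Q z)
        = (∫ z in Ioi (0:ℝ), Ψ z) + ∫ z in Ioi (0:ℝ), Q z := integral_add hΨint hQint
    have hIR : ∫ z in Ioi (0:ℝ), R t z
        = ν * ((∫ z in Ioi (0:ℝ), Ψ z) - (ξ₁^2+ξ₂^2) * E t) := by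
      rw [setIntegral_congr_fun measurableSet_Ioi (fun z hz => heat z hz)]
      rw [integral_const_mul, integral_sub hΨint (hfint.const_mul _), integral_const_mul]
    -- trace inequality
    have hptw : ∀ z ∈ Ioi (0:ℝ), -(2 * Φ z) * k ≤ Q z + k^2 * f t z := by
      intro z hz
      have h1 := hΦbd z
      have hq := Real.sq_sqrt (hQnonneg z)
      have hf2 := Real.sq_sqrt (hf_nonneg t z)
      have haux : 2*k*|Φ z| ≤ 2*k*(Real.sqrt (Q z) * Real.sqrt (f t z)) :=
        mul_le_mul_of_nonneg_left h1 (by positivity)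
      nlinarith [sq_nonneg (Real.sqrt (Q z) - k * Real.sqrt (f t z)), hk,
        neg_abs_le (Φ z), Real.sqrt_nonneg (Q z), Real.sqrt_nonneg (f t z)]
    have hQI_nonneg : 0 ≤ ∫ z in Ioi (0:ℝ), Q z :=
      setIntegral_nonneg measurableSet_Ioi fun z _ => hQnonneg z
    have htrace : f t 0 * k ≤ (∫ z in Ioi (0:ℝ), Q z) + k^2 * E t := by
      have hIneg : ∫ z in Ioi (0:ℝ), (-(2 * Φ z) * k) = f t 0 * k := by
        rw [integral_mul_const, integral_neg, hI2]
        ring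
      have hmono : ∫ z in Ioi (0:ℝ), (-(2 * Φ z) * k)
          ≤ ∫ z in Ioi (0:ℝ), (Q z + k^2 * f t z) :=
        setIntegral_mono_on ((h2Φint.neg).mul_const k)
          (hQint.add (hfint.const_mul _)) measurableSet_Ioi hptw
      have hsplit2 : ∫ z in Ioi (0:ℝ), (Q z + k^2 * f t z)
          = (∫ z in Ioi (0:ℝ), Q z) + k^2 * E t := by
        rw [integral_add hQint (hfint.const_mul _), integral_const_mul]
      rw [hIneg, hsplit2] at hmono
      exact hmono
    -- boundary condition computation
    have hkC : (k:ℂ) ≠ 0 := Complex.ofReal_ne_zero.mpr hk.ne'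
    set s0 : ℂ := (ξ₁:ℂ) * ω t 0 0 + (ξ₂:ℂ) * ω t 0 1 with hs0def
    have hbc0 : ωz t 0 0 = (k:ℂ)⁻¹ * (s0 * (ξ₁:ℂ)) - (k:ℂ) * ω t 0 0 := by
      have h := congrFun (hbc t htIoc) 0
      simp only [Pi.add_apply, Pi.neg_apply, Pi.smul_apply, smul_eq_mul,
        Matrix.cons_val_zero, Pi.zero_apply] at h
      linear_combination -h
    have hbc1 : ωz t 0 1 = (k:ℂ)⁻¹ * (s0 * (ξ₂:ℂ)) - (k:ℂ) * ω t 0 1 := by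
      have h := congrFun (hbc t htIoc) 1
      simp only [Pi.add_apply, Pi.neg_apply, Pi.smul_apply, smul_eq_mul,
        Matrix.cons_val_one, Matrix.head_cons, Matrix.cons_val_zero, Pi.zero_apply] at h
      linear_combination -h
    have hbc0' : ωz t 0 0 * (k:ℂ) = s0 * (ξ₁:ℂ) - (k:ℂ) * (k:ℂ) * ω t 0 0 := by
      rw [hbc0]
      field_simp
    have hbc1' : ωz t 0 1 * (k:ℂ) = s0 * (ξ₂:ℂ) - (k:ℂ) * (k:ℂ) * ω t 0 1 := by
      rw [hbc1]
      field_simp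
    have hconj : (starRingEnd ℂ) s0
        = (ξ₁:ℂ) * (starRingEnd ℂ) (ω t 0 0) + (ξ₂:ℂ) * (starRingEnd ℂ) (ω t 0 1) := by
      simp [hs0def, map_add, map_mul, Complex.conj_ofReal]
    have hns : s0 * (starRingEnd ℂ) s0 = ((Complex.normSq s0 : ℝ) : ℂ) := Complex.mul_conj s0
    have hf0C : ((f t 0 : ℝ) : ℂ) = ω t 0 0 * (starRingEnd ℂ) (ω t 0 0)
        + ω t 0 1 * (starRingEnd ℂ) (ω t 0 1) := by
      rw [Complex.mul_conj, Complex.mul_conj]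
      simp only [hfdef]
      push_cast [Complex.sq_norm]
      ring
    have e : (ωz t 0 0 * (starRingEnd ℂ) (ω t 0 0)
          + ωz t 0 1 * (starRingEnd ℂ) (ω t 0 1)) * (k:ℂ)
        = ((Complex.normSq s0 : ℝ):ℂ) - ((k^2 : ℝ):ℂ) * ((f t 0 : ℝ):ℂ) := by
      rw [hf0C]
      push_cast
      linear_combination ((starRingEnd ℂ) (ω t 0 0)) * hbc0'
        + ((starRingEnd ℂ) (ω t 0 1)) * hbc1' - s0 * hconj + hns
    have hΦ0k : Φ 0 * k = Complex.normSq s0 - k^2 * f t 0 := by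
      have e2 := congrArg Complex.re e
      rw [Complex.mul_re] at e2
      simp only [Complex.ofReal_re, Complex.ofReal_im, Complex.sub_re, Complex.mul_re,
        Complex.add_re, Complex.conj_re, Complex.conj_im, mul_zero, sub_zero,
        zero_mul] at e2
      simp only [hΦdef]
      linear_combination e2
    -- conclusion
    clear_value s0 Ψ Q Φ R k
    have hrw : (∫ z in Ioi (0:ℝ), 2 * R t z) = 2 * ∫ z in Ioi (0:ℝ), R t z :=
      integral_const_mul 2 _
    have hIΨ : ∫ z in Ioi (0:ℝ), Ψ z = -Φ 0 - ∫ z in Ioi (0:ℝ), Q z := by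
      rw [hsplit] at hI1
      linarith
    have hNnn : 0 ≤ Complex.normSq s0 := Complex.normSq_nonneg s0
    have hEt := hE_nonneg t
    obtain ⟨P, hP⟩ : ∃ x, (∫ z in Ioi (0:ℝ), R t z) = x := ⟨_, rfl⟩
    obtain ⟨IQ, hIQ⟩ : ∃ x, (∫ z in Ioi (0:ℝ), Q z) = x := ⟨_, rfl⟩
    obtain ⟨IS, hIS⟩ : ∃ x, (∫ z in Ioi (0:ℝ), Ψ z) = x := ⟨_, rfl⟩
    obtain ⟨F0, hF0⟩ : ∃ x, f t 0 = x := ⟨_, rfl⟩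
    obtain ⟨Et, hEt2⟩ : ∃ x, E t = x := ⟨_, rfl⟩
    obtain ⟨Ph, hPh⟩ : ∃ x, Φ 0 = x := ⟨_, rfl⟩
    obtain ⟨N, hN⟩ : ∃ x, Complex.normSq s0 = x := ⟨_, rfl⟩
    rw [hrw, hP]
    rw [hP, hIS, hEt2] at hIR
    rw [hIS, hPh, hIQ] at hIΨ
    rw [hF0, hIQ, hEt2] at htrace
    rw [hPh, hN, hF0] at hΦ0k
    rw [hN] at hNnn
    rw [hEt2] at hEt
    rw [hIQ] at hQI_nonneg
    rw [← hk2, hIΨ] at hIR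
    have hA : ν * k * (F0 * k) ≤ ν * k * (IQ + k^2 * Et) :=
      mul_le_mul_of_nonneg_left htrace (by positivity)
    have hB : ν * (Ph * k) = ν * (N - k^2 * F0) := by rw [hΦ0k]
    have hPk : P * k ≤ 0 := by
      rw [hIR]
      nlinarith only [hA, hB, hNnn, hν, hk, mul_nonneg hν.le hNnn]
    have hPle : P ≤ 0 := by
      by_contra hpos
      push_neg at hpos
      nlinarith only [mul_pos hpos hk, hPk]
    linarith only [hPle]
  -- energy vanishes
  have hEzero : ∀ t ∈ Icc (0:ℝ) T, E t = 0 := by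
    have hanti : AntitoneOn E (Icc 0 T) := by
      apply antitoneOn_of_deriv_nonpos (convex_Icc 0 T) hEcont
      · intro x hx
        rw [interior_Icc] at hx
        exact ((hEd x hx).differentiableAt).differentiableWithinAt
      · intro x hx
        rw [interior_Icc] at hx
        rw [(hEd x hx).deriv]
        exact hDle x hx
    intro t ht
    have h1 : E t ≤ E 0 := hanti ⟨le_refl 0, hT.le⟩ ht ht.1
    rw [hE0] at h1
    exact le_antisymm h1 (hE_nonneg t)
  -- conclusion
  intro t ht
  have hfz : ∀ z ∈ Ioi (0:ℝ), f t z = 0 := by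
    intro z₀ hz₀
    by_contra hne
    have hc : 0 < f t z₀ := lt_of_le_of_ne (hf_nonneg t z₀) (Ne.symm hne)
    have hca : ContinuousAt (f t) z₀ :=
      (hf_contz t ht z₀ (Ioi_subset_Ici_self hz₀)).continuousAt (Ici_mem_nhds hz₀)
    have hev : ∀ᶠ w in nhds z₀, f t z₀ / 2 < f t w :=
      hca.eventually (eventually_gt_nhds (half_lt_self hc))
    obtain ⟨ε, hε, hball⟩ := Metric.eventually_nhds_iff.mp hev
    set δ := min (ε/2) (z₀/2) with hδdef
    have hδ0 : 0 < δ := lt_min (by linarith) (by linarith [hz₀.out])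
    have hδ1 : δ ≤ ε/2 := min_le_left _ _
    have hδ2 : δ ≤ z₀/2 := min_le_right _ _
    have hz₀' : (0:ℝ) < z₀ := hz₀
    have hsub : Ioo (z₀-δ) (z₀+δ) ⊆ Ioi (0:ℝ) := by
      intro w hw
      have := hw.1
      simp only [mem_Ioi]
      linarith
    have hlow : ∀ w ∈ Ioo (z₀-δ) (z₀+δ), f t z₀/2 ≤ f t w := by
      intro w hw
      refine le_of_lt (hball ?_)
      rw [Real.dist_eq, abs_lt]
      constructor
      · linarith [hw.1]
      · linarith [hw.2]
    have hfin : volume (Ioo (z₀-δ) (z₀+δ)) ≠ ⊤ := by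
      rw [Real.volume_Ioo]; exact ENNReal.ofReal_ne_top
    have h1 : f t z₀/2 * (volume (Ioo (z₀-δ) (z₀+δ))).toReal
        ≤ ∫ w in Ioo (z₀-δ) (z₀+δ), f t w :=
      by have := setIntegral_ge_of_const_le measurableSet_Ioo hfin hlow
           ((hf_int t ht).mono_set hsub)
         rw [smul_eq_mul, mul_comm] at this; exact this
    have h2 : (∫ w in Ioo (z₀-δ) (z₀+δ), f t w) ≤ E t := by
      refine setIntegral_mono_set (hf_int t ht) ?_ (HasSubset.Subset.eventuallyLE hsub)
      filter_upwards with w using hf_nonneg t w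
    have h3 : (volume (Ioo (z₀-δ) (z₀+δ))).toReal = 2*δ := by
      rw [Real.volume_Ioo, ENNReal.toReal_ofReal (by linarith)]
      ring
    rw [h3] at h1
    rw [hEzero t ht] at h2
    nlinarith [mul_pos (half_pos hc) hδ0]
  have hωz : ∀ z ∈ Ioi (0:ℝ), ω t z = 0 := by
    intro z hz
    have h := hfz z hz
    simp only [hfdef] at h
    have h0 : ‖ω t z 0‖ = 0 := by nlinarith [norm_nonneg (ω t z 0), norm_nonneg (ω t z 1), sq_nonneg (‖ω t z 0‖), sq_nonneg (‖ω t z 1‖)]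
    have h1 : ‖ω t z 1‖ = 0 := by nlinarith [norm_nonneg (ω t z 0), norm_nonneg (ω t z 1)]
    funext i
    fin_cases i
    · simpa using norm_eq_zero.mp h0
    · simpa using norm_eq_zero.mp h1
  intro z hz
  rcases eq_or_lt_of_le (show (0:ℝ) ≤ z from hz) with h0 | h0
  · -- z = 0 : use continuity from the right
    subst h0
    have hωc : ContinuousWithinAt (fun z => ω t z) (Ici 0) 0 := (hslice t ht) 0 self_mem_Ici
    have h1 : Tendsto (fun z => ω t z) (nhdsWithin 0 (Ioi 0)) (nhds (ω t 0)) :=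
      hωc.tendsto.mono_left (nhdsWithin_mono 0 Ioi_subset_Ici_self)
    have h2 : Tendsto (fun z => ω t z) (nhdsWithin 0 (Ioi 0)) (nhds 0) := by
      apply Tendsto.congr' ?_ tendsto_const_nhds
      filter_upwards [self_mem_nhdsWithin] with w hw using (hωz w hw).symm
    exact tendsto_nhds_unique h1 h2
  · exact hωz z h0

end
end

section
/- Let ν > 0 and ξ ∈ ℝ². Let D be a real symmetric 2×2 matrix with det D = 0, and write s := trace D. Let μ ∈ ℂ satisfy Re μ > 0 and μ ≠ s, and set λ := ν μ² − ν|ξ|². Let f : [0,∞) → ℂ² be continuous with compact support. Define u(y) := ∫₀^∞ (1/(2νμ)) (e^{−μ|y−z|} + e^{−μ(y+z)}) f(z) dz + ∫₀^∞ (e^{−μ(y+z)}/(ν μ (μ − s))) (D f(z)) dz for y ≥ 0. Then u is twice differentiable on (0,∞) with λ u(y) − ν (u''(y) − |ξ|² u(y)) = f(y) for every y > 0, and u'(0) + D u(0) = 0, where u'(0) is the one-sided derivative at 0. -/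
open MeasureTheory Set Complex

noncomputable section

lemma hasDerivAt_cexp_cmul (c : ℂ) (y : ℝ) :
    HasDerivAt (fun t : ℝ => Complex.exp (c * t)) (c * Complex.exp (c * y)) y := by
  have h1 : HasDerivAt (fun z : ℂ => Complex.exp (c * z)) (c * Complex.exp (c * y)) (y : ℂ) := by
    simpa [mul_comm, Function.comp_def] using
      (Complex.hasDerivAt_exp (c * y)).comp (y : ℂ) ((hasDerivAt_id (y : ℂ)).const_mul c)
  exact h1.comp_ofReal

lemma hasDerivAt_primitive {F : ℝ → Fin 2 → ℂ} (hF : Continuous F) (y : ℝ) :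
    HasDerivAt (fun t => ∫ s in (0:ℝ)..t, F s) (F y) y :=
  intervalIntegral.integral_hasDerivAt_right (hF.intervalIntegrable 0 y)
    hF.stronglyMeasurable.stronglyMeasurableAtFilter hF.continuousAt

lemma exp_mul_cancel (μ : ℂ) (y : ℝ) :
    Complex.exp (-μ * y) * Complex.exp (μ * y) = 1 := by
  rw [← Complex.exp_add]; ring_nf; exact Complex.exp_zero

noncomputable def gFun (μ c : ℂ) (Cf K : Fin 2 → ℂ) (f : ℝ → Fin 2 → ℂ) (y : ℝ) : Fin 2 → ℂ :=
  c • (Complex.exp (-μ * y) • (∫ t in (0:ℝ)..y, Complex.exp (μ * t) • f t)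
     + Complex.exp (μ * y) • (Cf - ∫ t in (0:ℝ)..y, Complex.exp (-μ * t) • f t))
  + Complex.exp (-μ * y) • K

noncomputable def gFun' (μ c : ℂ) (Cf K : Fin 2 → ℂ) (f : ℝ → Fin 2 → ℂ) (y : ℝ) : Fin 2 → ℂ :=
  c • ((-μ * Complex.exp (-μ * y)) • (∫ t in (0:ℝ)..y, Complex.exp (μ * t) • f t)
     + (μ * Complex.exp (μ * y)) • (Cf - ∫ t in (0:ℝ)..y, Complex.exp (-μ * t) • f t))
  + (-μ * Complex.exp (-μ * y)) • K

lemma gFun_hasDerivAt (μ c : ℂ) (Cf K : Fin 2 → ℂ) {f : ℝ → Fin 2 → ℂ} (hf : Continuous f)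
    (y : ℝ) : HasDerivAt (gFun μ c Cf K f) (gFun' μ c Cf K f y) y := by
  have hcP : Continuous fun t : ℝ => Complex.exp (μ * t) • f t :=
    ((Complex.continuous_exp.comp (continuous_const.mul Complex.continuous_ofReal)).smul hf)
  have hcR : Continuous fun t : ℝ => Complex.exp (-μ * t) • f t :=
    ((Complex.continuous_exp.comp (continuous_const.mul Complex.continuous_ofReal)).smul hf)
  have hP := hasDerivAt_primitive hcP y
  have hR := hasDerivAt_primitive hcR y
  have hEm := hasDerivAt_cexp_cmul (-μ) y
  have hEp := hasDerivAt_cexp_cmul μ y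
  have H := (((hEm.smul hP).add (hEp.smul ((hasDerivAt_const y Cf).sub hR))).const_smul c).add
    (hEm.smul_const K)
  refine H.congr_deriv (Eq.symm ?_)
  funext i
  simp only [gFun', Pi.add_apply, Pi.smul_apply, Pi.sub_apply, Pi.zero_apply, smul_eq_mul,
    sub_zero, zero_sub, Pi.neg_apply, neg_smul, smul_neg]
  ring

lemma gFun'_hasDerivAt (μ c : ℂ) (Cf K : Fin 2 → ℂ) {f : ℝ → Fin 2 → ℂ} (hf : Continuous f)
    (y : ℝ) :
    HasDerivAt (gFun' μ c Cf K f) (μ ^ 2 • gFun μ c Cf K f y - (2 * μ * c) • f y) y := by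
  have hcP : Continuous fun t : ℝ => Complex.exp (μ * t) • f t :=
    ((Complex.continuous_exp.comp (continuous_const.mul Complex.continuous_ofReal)).smul hf)
  have hcR : Continuous fun t : ℝ => Complex.exp (-μ * t) • f t :=
    ((Complex.continuous_exp.comp (continuous_const.mul Complex.continuous_ofReal)).smul hf)
  have hP := hasDerivAt_primitive hcP y
  have hR := hasDerivAt_primitive hcR y
  have hEm := (hasDerivAt_cexp_cmul (-μ) y).const_mul (-μ)
  have hEp := (hasDerivAt_cexp_cmul μ y).const_mul μ
  have H := (((hEm.smul hP).add (hEp.smul ((hasDerivAt_const y Cf).sub hR))).const_smul c).add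
    (hEm.smul_const K)
  refine H.congr_deriv (Eq.symm ?_)
  have hcancel := exp_mul_cancel μ y
  funext i
  simp only [gFun, gFun', Pi.add_apply, Pi.smul_apply, Pi.sub_apply, Pi.zero_apply, smul_eq_mul,
    sub_zero, zero_sub, Pi.neg_apply, neg_smul, smul_neg]
  linear_combination (2 * μ * c * (f y i)) * hcancel

lemma cayley_det_zero (D : Matrix (Fin 2) (Fin 2) ℝ) (hDdet : D.det = 0) :
    (D.map Complex.ofReal) * (D.map Complex.ofReal) = (D.trace : ℂ) • (D.map Complex.ofReal) := by
  obtain ⟨a, b, c, d, rfl⟩ : ∃ a b c d, D = !![a, b; c, d] :=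
    ⟨D 0 0, D 0 1, D 1 0, D 1 1, (Matrix.eta_fin_two D)⟩
  rw [Matrix.det_fin_two_of] at hDdet
  have hdet : (a : ℂ) * (d : ℂ) - (b : ℂ) * (c : ℂ) = 0 := by exact_mod_cast hDdet
  have htr : ((!![a, b; c, d] : Matrix (Fin 2) (Fin 2) ℝ).trace : ℂ) = (a : ℂ) + (d : ℂ) := by
    rw [Matrix.trace_fin_two_of]; push_cast; ring
  have hmap : (!![a, b; c, d] : Matrix (Fin 2) (Fin 2) ℝ).map Complex.ofReal
      = !![(a:ℂ), (b:ℂ); (c:ℂ), (d:ℂ)] := by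
    ext i j; fin_cases i <;> fin_cases j <;> simp
  rw [hmap, htr, Matrix.mul_fin_two, Matrix.smul_of]
  ext i j
  fin_cases i <;> fin_cases j <;> simp <;>
    first
      | linear_combination hdet
      | linear_combination -hdet
      | linear_combination (2:ℂ) * hdet
      | linear_combination (-2:ℂ) * hdet
      | ring

lemma hcs_smul {e : ℝ → ℂ} {f : ℝ → Fin 2 → ℂ} (hfc : HasCompactSupport f) :
    HasCompactSupport fun z => e z • f z := by
  apply hfc.mono
  intro z hz
  simp only [Function.mem_support] at hz ⊢
  intro h
  exact hz (by simp [h])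

lemma mulVec_integral (M : Matrix (Fin 2) (Fin 2) ℂ) {v : ℝ → Fin 2 → ℂ}
    (hv : IntegrableOn v (Ioi (0:ℝ))) :
    M.mulVec (∫ z in Ioi (0:ℝ), v z) = ∫ z in Ioi (0:ℝ), M.mulVec (v z) := by
  let L : (Fin 2 → ℂ) →L[ℂ] (Fin 2 → ℂ) := LinearMap.toContinuousLinearMap M.mulVecLin
  have h : ∀ x, M.mulVec x = L x := fun x => rfl
  simp only [h]
  exact (ContinuousLinearMap.integral_comp_comm L hv).symm

set_option maxHeartbeats 2000000 in
/-- The explicit resolvent for the half-line Laplacian with the general Robin-type boundary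
condition u'(0) + D u(0) = 0, where D is a real symmetric 2×2 matrix with det D = 0. -/
theorem robin_resolvent_green_function
    (ν : ℝ) (hν : 0 < ν) (ξ₁ ξ₂ : ℝ)
    (D : Matrix (Fin 2) (Fin 2) ℝ) (hDsymm : D.IsSymm) (hDdet : D.det = 0)
    (μ : ℂ) (hμre : 0 < μ.re) (hμs : μ ≠ (D.trace : ℂ))
    (lam : ℂ) (hlam : lam = (ν : ℂ) * μ ^ 2 - (ν : ℂ) * ((ξ₁ ^ 2 + ξ₂ ^ 2 : ℝ) : ℂ))
    (f : ℝ → Fin 2 → ℂ) (hf : Continuous f) (hfc : HasCompactSupport f)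
    (u : ℝ → Fin 2 → ℂ)
    (hu : ∀ y, u y =
      (∫ z in Ioi (0 : ℝ),
        ((1 / (2 * (ν : ℂ) * μ)) *
          (Complex.exp (-μ * (|y - z| : ℝ)) + Complex.exp (-μ * ((y + z : ℝ) : ℂ)))) • f z)
      + ∫ z in Ioi (0 : ℝ),
          (Complex.exp (-μ * ((y + z : ℝ) : ℂ)) / ((ν : ℂ) * μ * (μ - (D.trace : ℂ)))) •
            (D.map (Complex.ofReal)).mulVec (f z)) :
    (∀ y ∈ Ioi (0 : ℝ),
        DifferentiableAt ℝ u y ∧ DifferentiableAt ℝ (deriv u) y ∧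
        lam • u y - (ν : ℂ) • (deriv (deriv u) y - ((ξ₁ ^ 2 + ξ₂ ^ 2 : ℝ) : ℂ) • u y) = f y)
    ∧ derivWithin u (Ici 0) 0 + (D.map (Complex.ofReal)).mulVec (u 0) = 0 := by
  have hν0 : (ν : ℂ) ≠ 0 := Complex.ofReal_ne_zero.mpr hν.ne'
  have hμ0 : μ ≠ 0 := fun h => by simp [h] at hμre
  have hμs0 : μ - (D.trace : ℂ) ≠ 0 := sub_ne_zero.mpr hμs
  set s : ℂ := (D.trace : ℂ) with hs
  set c : ℂ := 1 / (2 * (ν : ℂ) * μ) with hc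
  set c₂ : ℂ := 1 / ((ν : ℂ) * μ * (μ - s)) with hc₂
  set M : Matrix (Fin 2) (Fin 2) ℂ := D.map Complex.ofReal with hM
  set Cf : Fin 2 → ℂ := ∫ z in Ioi (0:ℝ), Complex.exp (-μ * z) • f z with hCf
  set DCf : Fin 2 → ℂ := ∫ z in Ioi (0:ℝ), Complex.exp (-μ * z) • M.mulVec (f z) with hDCf
  set K : Fin 2 → ℂ := c • Cf + c₂ • DCf with hK
  set g : ℝ → Fin 2 → ℂ := gFun μ c Cf K f with hg
  -- continuity / integrability facts
  have hcexp : ∀ ψ : ℝ → ℝ, Continuous ψ →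
      Continuous fun z : ℝ => Complex.exp (-μ * (ψ z : ℝ)) • f z := fun ψ hψ =>
    (Complex.continuous_exp.comp (continuous_const.mul (Complex.continuous_ofReal.comp hψ))).smul hf
  have hMc : Continuous fun z : ℝ => M.mulVec (f z) :=
    (LinearMap.toContinuousLinearMap M.mulVecLin).continuous.comp hf
  have hMsupp : HasCompactSupport fun z : ℝ => M.mulVec (f z) :=
    hfc.comp_left (g := M.mulVec) (Matrix.mulVec_zero M)
  have intE : IntegrableOn (fun z : ℝ => Complex.exp (-μ * z) • f z) (Ioi 0) :=
    ((hcexp id continuous_id).integrable_of_hasCompactSupport (hcs_smul hfc)).integrableOn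
  have intED : IntegrableOn (fun z : ℝ => Complex.exp (-μ * z) • M.mulVec (f z)) (Ioi 0) :=
    (((Complex.continuous_exp.comp (continuous_const.mul
        Complex.continuous_ofReal)).smul hMc).integrable_of_hasCompactSupport
      (hcs_smul hMsupp)).integrableOn
  have intA : ∀ y : ℝ,
      IntegrableOn (fun z : ℝ => Complex.exp (-μ * (|y - z| : ℝ)) • f z) (Ioi 0) := fun y =>
    ((hcexp (fun z => |y - z|) ((continuous_const.sub continuous_id).abs)
      ).integrable_of_hasCompactSupport (hcs_smul hfc)).integrableOn
  have intB : ∀ y : ℝ,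
      IntegrableOn (fun z : ℝ => Complex.exp (-μ * ((y + z : ℝ) : ℂ)) • f z) (Ioi 0) := fun y =>
    ((hcexp (fun z => y + z) (continuous_const.add continuous_id)
      ).integrable_of_hasCompactSupport (hcs_smul hfc)).integrableOn
  -- the key identity : u agrees with the closed form g on [0, ∞)
  have heq : EqOn u g (Ici 0) := by
    intro y hy
    have hy0 : (0:ℝ) ≤ y := hy
    -- second integral
    have hI2 : (∫ z in Ioi (0:ℝ),
        (Complex.exp (-μ * ((y + z : ℝ) : ℂ)) / ((ν : ℂ) * μ * (μ - s))) • M.mulVec (f z))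
        = Complex.exp (-μ * y) • (c₂ • DCf) := by
      have hpt : ∀ z : ℝ, Complex.exp (-μ * ((y + z : ℝ) : ℂ)) / ((ν : ℂ) * μ * (μ - s))
          = (Complex.exp (-μ * y) * c₂) * Complex.exp (-μ * z) := by
        intro z
        have h1 : (-μ * ((y + z : ℝ) : ℂ)) = -μ * y + -μ * z := by push_cast; ring
        rw [h1, Complex.exp_add, hc₂]
        field_simp
      simp only [hpt, mul_smul]
      rw [integral_smul, integral_smul, hDCf]
    -- B-part of the first integral
    have hJ2 : (∫ z in Ioi (0:ℝ), Complex.exp (-μ * ((y + z : ℝ) : ℂ)) • f z)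
        = Complex.exp (-μ * y) • Cf := by
      have hpt : ∀ z : ℝ, Complex.exp (-μ * ((y + z : ℝ) : ℂ))
          = Complex.exp (-μ * y) * Complex.exp (-μ * z) := by
        intro z
        have h1 : (-μ * ((y + z : ℝ) : ℂ)) = -μ * y + -μ * z := by push_cast; ring
        rw [h1, Complex.exp_add]
      simp only [hpt, mul_smul]
      rw [integral_smul, hCf]
    -- splitting of Ioi 0 at y
    have hunion : Ioc (0:ℝ) y ∪ Ioi y = Ioi 0 := Ioc_union_Ioi_eq_Ioi hy0
    have hdisj : Disjoint (Ioc (0:ℝ) y) (Ioi y) := Ioc_disjoint_Ioi le_rfl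
    -- A-part
    have hJ1 : (∫ z in Ioi (0:ℝ), Complex.exp (-μ * (|y - z| : ℝ)) • f z)
        = Complex.exp (-μ * y) • (∫ t in (0:ℝ)..y, Complex.exp (μ * t) • f t)
        + Complex.exp (μ * y) • (Cf - ∫ t in (0:ℝ)..y, Complex.exp (-μ * t) • f t) := by
      have hsplit : (∫ z in Ioi (0:ℝ), Complex.exp (-μ * (|y - z| : ℝ)) • f z)
          = (∫ z in Ioc (0:ℝ) y, Complex.exp (-μ * (|y - z| : ℝ)) • f z)
          + ∫ z in Ioi y, Complex.exp (-μ * (|y - z| : ℝ)) • f z := by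
        rw [← hunion]
        exact setIntegral_union hdisj measurableSet_Ioi
          ((intA y).mono_set (hunion ▸ subset_union_left))
          ((intA y).mono_set (hunion ▸ subset_union_right))
      have hpc : (∫ z in Ioc (0:ℝ) y, Complex.exp (-μ * (|y - z| : ℝ)) • f z)
          = Complex.exp (-μ * y) • (∫ t in (0:ℝ)..y, Complex.exp (μ * t) • f t) := by
        rw [intervalIntegral.integral_of_le hy0]
        have hEqOn : EqOn (fun z : ℝ => Complex.exp (-μ * (|y - z| : ℝ)) • f z)
            (fun z : ℝ => Complex.exp (-μ * y) • (Complex.exp (μ * z) • f z)) (Ioc 0 y) := by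
          intro z hz
          have habs : |y - z| = y - z := abs_of_nonneg (by linarith [hz.2])
          have h1 : (-μ * ((|y - z| : ℝ) : ℂ)) = -μ * y + μ * z := by
            rw [habs]; push_cast; ring
          simp only [h1, Complex.exp_add, mul_smul]
        rw [setIntegral_congr_fun measurableSet_Ioc hEqOn, integral_smul]
      have hpi : (∫ z in Ioi y, Complex.exp (-μ * (|y - z| : ℝ)) • f z)
          = Complex.exp (μ * y) • (Cf - ∫ t in (0:ℝ)..y, Complex.exp (-μ * t) • f t) := by
        have hCfsplit : Cf = (∫ z in Ioc (0:ℝ) y, Complex.exp (-μ * z) • f z)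
            + ∫ z in Ioi y, Complex.exp (-μ * z) • f z := by
          rw [hCf, ← hunion]
          exact setIntegral_union hdisj measurableSet_Ioi
            (intE.mono_set (hunion ▸ subset_union_left))
            (intE.mono_set (hunion ▸ subset_union_right))
        have hRy : (∫ t in (0:ℝ)..y, Complex.exp (-μ * t) • f t)
            = ∫ z in Ioc (0:ℝ) y, Complex.exp (-μ * z) • f z :=
          intervalIntegral.integral_of_le hy0
        have hIoiy : (∫ z in Ioi y, Complex.exp (-μ * z) • f z)
            = Cf - ∫ t in (0:ℝ)..y, Complex.exp (-μ * t) • f t := by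
          rw [hRy, hCfsplit]; abel
        have hEqOn : EqOn (fun z : ℝ => Complex.exp (-μ * (|y - z| : ℝ)) • f z)
            (fun z : ℝ => Complex.exp (μ * y) • (Complex.exp (-μ * z) • f z)) (Ioi y) := by
          intro z hz
          have habs : |y - z| = z - y := by
            rw [abs_sub_comm]; exact abs_of_nonneg (by linarith [mem_Ioi.mp hz])
          have h1 : (-μ * ((|y - z| : ℝ) : ℂ)) = μ * y + -μ * z := by
            rw [habs]; push_cast; ring
          simp only [h1, Complex.exp_add, mul_smul]
        rw [setIntegral_congr_fun measurableSet_Ioi hEqOn, integral_smul, hIoiy]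
      rw [hsplit, hpc, hpi]
    -- splitting the first integral into A and B parts
    have hI1 : (∫ z in Ioi (0:ℝ), (c * (Complex.exp (-μ * (|y - z| : ℝ))
          + Complex.exp (-μ * ((y + z : ℝ) : ℂ)))) • f z)
        = c • (∫ z in Ioi (0:ℝ), Complex.exp (-μ * (|y - z| : ℝ)) • f z)
        + c • ∫ z in Ioi (0:ℝ), Complex.exp (-μ * ((y + z : ℝ) : ℂ)) • f z := by
      have hpt : ∀ z : ℝ, (c * (Complex.exp (-μ * (|y - z| : ℝ))
            + Complex.exp (-μ * ((y + z : ℝ) : ℂ)))) • f z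
          = c • ((Complex.exp (-μ * (|y - z| : ℝ)) • f z)
            + (Complex.exp (-μ * ((y + z : ℝ) : ℂ)) • f z)) := by
        intro z
        rw [smul_add, mul_add, add_smul, mul_smul, mul_smul]
      simp only [hpt]
      rw [integral_smul, integral_add (intA y) (intB y), smul_add]
    rw [hu y, hI1, hJ1, hJ2, hI2, hg]
    funext i
    simp only [gFun, Pi.add_apply, Pi.smul_apply, Pi.sub_apply, hK, smul_eq_mul]
    ring
  -- derivative facts
  have hgd : ∀ y, HasDerivAt g (gFun' μ c Cf K f y) y := fun y =>
    gFun_hasDerivAt μ c Cf K hf y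
  have hgd2 : ∀ y, HasDerivAt (gFun' μ c Cf K f) (μ ^ 2 • g y - (2 * μ * c) • f y) y := fun y =>
    gFun'_hasDerivAt μ c Cf K hf y
  constructor
  · intro y hy
    have hy' : (0:ℝ) < y := hy
    have hmem : Ioi (0:ℝ) ∈ nhds y := isOpen_Ioi.mem_nhds hy
    have hug : u =ᶠ[nhds y] g :=
      Filter.eventuallyEq_of_mem hmem (fun z hz => heq (mem_Ici.mpr (le_of_lt hz)))
    have hdu : HasDerivAt u (gFun' μ c Cf K f y) y := (hgd y).congr_of_eventuallyEq hug
    have hderivEq : ∀ z ∈ Ioi (0:ℝ), deriv u z = gFun' μ c Cf K f z := by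
      intro z hz
      have huz : u =ᶠ[nhds z] g :=
        Filter.eventuallyEq_of_mem (isOpen_Ioi.mem_nhds hz) (fun w hw => heq (mem_Ici.mpr (le_of_lt hw)))
      exact ((hgd z).congr_of_eventuallyEq huz).deriv
    have hderivug : deriv u =ᶠ[nhds y] gFun' μ c Cf K f :=
      Filter.eventuallyEq_of_mem hmem hderivEq
    have hdu2 : HasDerivAt (deriv u) (μ ^ 2 • g y - (2 * μ * c) • f y) y :=
      (hgd2 y).congr_of_eventuallyEq hderivug
    refine ⟨hdu.differentiableAt, hdu2.differentiableAt, ?_⟩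
    rw [hdu2.deriv, heq (mem_Ici.mpr (le_of_lt hy')), hlam]
    funext i
    simp only [Pi.add_apply, Pi.smul_apply, Pi.sub_apply, smul_eq_mul]
    have hcval : (2 * μ * c) = 1 / (ν : ℂ) := by
      rw [hc]; field_simp
    field_simp [hcval]
    linear_combination (f y i) * (by rw [hc]; field_simp : (ν:ℂ) * μ * c * 2 = 1)
  · -- boundary condition
    have h0 : u 0 = g 0 := heq self_mem_Ici
    have hdw : derivWithin u (Ici 0) 0 = gFun' μ c Cf K f 0 := by
      rw [derivWithin_congr heq h0]
      exact ((hgd 0).hasDerivWithinAt).derivWithin (uniqueDiffOn_Ici 0 0 self_mem_Ici)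
    have hg0 : g 0 = c • Cf + K := by
      rw [hg]
      funext i
      simp [gFun, intervalIntegral.integral_same]
    have hg'0 : gFun' μ c Cf K f 0 = (c * μ) • Cf + (-μ) • K := by
      funext i
      simp [gFun', intervalIntegral.integral_same]
      ring
    have hDCfEq : M.mulVec Cf = DCf := by
      rw [hCf, mulVec_integral M intE, hDCf]
      congr 1
      funext z
      rw [Matrix.mulVec_smul]
    have hM2 : M * M = s • M := cayley_det_zero D hDdet
    have hDDCf : M.mulVec DCf = s • DCf := by
      rw [← hDCfEq, Matrix.mulVec_mulVec, hM2, Matrix.smul_mulVec, hDCfEq]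
    rw [hdw, h0, hg0, hg'0, hK]
    rw [Matrix.mulVec_add, Matrix.mulVec_smul, Matrix.mulVec_add, Matrix.mulVec_smul,
      Matrix.mulVec_smul, hDCfEq, hDDCf]
    funext i
    simp only [Pi.add_apply, Pi.smul_apply, Pi.zero_apply, smul_eq_mul, neg_mul]
    rw [hc, hc₂]
    field_simp
    ring
end
end

section
/- There is a universal constant C > 0 with the following property. Let ν > 0, let ξ ∈ ℝ² with ν|ξ|² ≥ 1, let t > 0 and y, z ≥ 0, and set a := (y+z)/(2νt). Let θ := 1/2 if a/|ξ| ∈ (1/2, 3/2) and θ := 1 otherwise. For b ∈ ℝ define μ(b) := θ a + i b and λ(b) := ν μ(b)² − ν|ξ|² (then μ(b) ≠ |ξ| for every b ∈ ℝ). Then | ∫_ℝ e^{λ(b) t} e^{−μ(b)(y+z)} · (2 i |ξ| / (μ(b) − |ξ|)) db | ≤ C (ν t)^{−1/2} e^{−ν|ξ|² t} e^{−(y+z)²/(8 ν t)}. -/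
open MeasureTheory Set Complex

noncomputable section

set_option maxHeartbeats 1000000 in
/-- Gaussian bound for the residual part of the time-dependent Green's function of the
Stokes vorticity problem in the regime ν|ξ|² ≥ 1: the contour integral along the parabola
parametrized by b ↦ μ(b) = θa + ib satisfies a heat-kernel-type upper bound. -/
theorem residual_kernel_contour_bound :
    ∃ C > (0 : ℝ),
      ∀ (ν ξ₁ ξ₂ t y z : ℝ), 0 < ν → 1 ≤ ν * (ξ₁ ^ 2 + ξ₂ ^ 2) →
        0 < t → 0 ≤ y → 0 ≤ z →
      ∀ a : ℝ, a = (y + z) / (2 * ν * t) →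
      ∀ θ : ℝ,
        (1 / 2 < a / Real.sqrt (ξ₁ ^ 2 + ξ₂ ^ 2) ∧
          a / Real.sqrt (ξ₁ ^ 2 + ξ₂ ^ 2) < 3 / 2 → θ = 1 / 2) →
        (¬(1 / 2 < a / Real.sqrt (ξ₁ ^ 2 + ξ₂ ^ 2) ∧
          a / Real.sqrt (ξ₁ ^ 2 + ξ₂ ^ 2) < 3 / 2) → θ = 1) →
      ∀ μf : ℝ → ℂ, (∀ b, μf b = ((θ * a : ℝ) : ℂ) + (b : ℂ) * Complex.I) →
      ∀ lamf : ℝ → ℂ,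
        (∀ b, lamf b = (ν : ℂ) * μf b ^ 2 - (ν : ℂ) * ((ξ₁ ^ 2 + ξ₂ ^ 2 : ℝ) : ℂ)) →
        ‖(∫ b : ℝ,
            Complex.exp (lamf b * (t : ℂ)) * Complex.exp (-μf b * ((y + z : ℝ) : ℂ)) *
              (2 * Complex.I * ((Real.sqrt (ξ₁ ^ 2 + ξ₂ ^ 2) : ℝ) : ℂ) /
                (μf b - ((Real.sqrt (ξ₁ ^ 2 + ξ₂ ^ 2) : ℝ) : ℂ))))‖
          ≤ C / Real.sqrt (ν * t) * Real.exp (-(ν * (ξ₁ ^ 2 + ξ₂ ^ 2) * t)) *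
              Real.exp (-(y + z) ^ 2 / (8 * ν * t)) := by
  refine ⟨8 * Real.sqrt Real.pi, by positivity, ?_⟩
  intro ν ξ₁ ξ₂ t y z hν hνq ht hy hz a ha θ hθ1 hθ2 μf hμ lamf hlam
  set q : ℝ := ξ₁ ^ 2 + ξ₂ ^ 2 with hqdef
  have hq : 0 < q := by nlinarith
  set r : ℝ := Real.sqrt q with hrdef
  have hr : 0 < r := Real.sqrt_pos.mpr hq
  have hr2 : r ^ 2 = q := Real.sq_sqrt hq.le
  set s : ℝ := y + z with hsdef
  have hs0 : 0 ≤ s := by positivity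
  have hνt : 0 < ν * t := mul_pos hν ht
  have ha0 : 0 ≤ a := by rw [ha]; positivity
  have hs : s = 2 * ν * t * a := by rw [ha]; field_simp
  have hθ : θ = 1 / 2 ∨ θ = 1 := by
    by_cases h : 1 / 2 < a / r ∧ a / r < 3 / 2
    · exact Or.inl (hθ1 h)
    · exact Or.inr (hθ2 h)
  have hsep : r / 4 ≤ |θ * a - r| := by
    by_cases h : 1 / 2 < a / r ∧ a / r < 3 / 2
    · obtain ⟨h1, h2⟩ := h
      rw [div_lt_iff₀ hr] at h2
      rw [hθ1 ⟨h1, by rw [div_lt_iff₀ hr]; exact h2⟩, abs_sub_comm]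
      exact le_trans (by nlinarith) (le_abs_self _)
    · have hθv := hθ2 h
      rw [not_and_or, not_lt, not_lt] at h
      rcases h with h | h
      · rw [div_le_iff₀ hr] at h
        rw [hθv, one_mul, abs_sub_comm]
        exact le_trans (by nlinarith) (le_abs_self _)
      · rw [le_div_iff₀ hr] at h
        rw [hθv, one_mul]
        exact le_trans (by nlinarith) (le_abs_self _)
  have key : ∀ b : ℝ,
      ‖Complex.exp (lamf b * (t : ℂ)) * Complex.exp (-μf b * (s : ℂ)) *
        (2 * Complex.I * (r : ℂ) / (μf b - (r : ℂ)))‖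
      ≤ 8 * Real.exp (-(ν * t) * b ^ 2) *
          (Real.exp (-(ν * q * t)) * Real.exp (-s ^ 2 / (8 * ν * t))) := by
    intro b
    have hre1 : (lamf b * (t : ℂ)).re = ν * t * ((θ * a) ^ 2 - b ^ 2 - q) := by
      rw [hlam, hμ]
      simp [Complex.mul_re, Complex.mul_im, Complex.add_re, Complex.add_im, pow_two]
      ring
    have hre2 : (-μf b * (s : ℂ)).re = -(θ * a * s) := by
      rw [hμ]
      simp [Complex.mul_re, Complex.mul_im]
    have hden : r / 4 ≤ ‖μf b - (r : ℂ)‖ := by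
      refine le_trans hsep (le_trans ?_ (Complex.abs_re_le_norm _))
      have h' : (μf b - (r : ℂ)).re = θ * a - r := by rw [hμ]; simp
      rw [h']
    have hdpos : (0 : ℝ) < ‖μf b - (r : ℂ)‖ :=
      lt_of_lt_of_le (by positivity) hden
    have hfac : ‖2 * Complex.I * (r : ℂ) / (μf b - (r : ℂ))‖ ≤ 8 := by
      rw [norm_div, norm_mul, norm_mul, Complex.norm_two, Complex.norm_I, mul_one,
        Complex.norm_real, Real.norm_eq_abs, _root_.abs_of_nonneg hr.le, div_le_iff₀ hdpos]
      nlinarith [hden]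
    have h8 : s ^ 2 / (8 * ν * t) = ν * t * a ^ 2 / 2 := by
      rw [hs]; field_simp; ring
    have hexp : ν * t * ((θ * a) ^ 2 - b ^ 2 - q) + -(θ * a * s) ≤
        -(ν * t) * b ^ 2 + (-(ν * q * t) + -s ^ 2 / (8 * ν * t)) := by
      have hsa : θ * a * s = 2 * ν * t * θ * a ^ 2 := by rw [hs]; ring
      have haa : 0 ≤ ν * t * a ^ 2 := by positivity
      rcases hθ with h | h <;> subst h <;> rw [neg_div, h8] <;> nlinarith
    calc ‖Complex.exp (lamf b * (t : ℂ)) * Complex.exp (-μf b * (s : ℂ)) *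
          (2 * Complex.I * (r : ℂ) / (μf b - (r : ℂ)))‖
        = Real.exp ((lamf b * (t : ℂ)).re) * Real.exp ((-μf b * (s : ℂ)).re) *
            ‖2 * Complex.I * (r : ℂ) / (μf b - (r : ℂ))‖ := by
          rw [norm_mul, norm_mul, Complex.norm_exp, Complex.norm_exp]
      _ ≤ Real.exp ((lamf b * (t : ℂ)).re) * Real.exp ((-μf b * (s : ℂ)).re) * 8 :=
          mul_le_mul_of_nonneg_left hfac (by positivity)
      _ = 8 * Real.exp (ν * t * ((θ * a) ^ 2 - b ^ 2 - q) + -(θ * a * s)) := by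
          rw [hre1, hre2, Real.exp_add]; ring
      _ ≤ 8 * Real.exp (-(ν * t) * b ^ 2 + (-(ν * q * t) + -s ^ 2 / (8 * ν * t))) :=
          mul_le_mul_of_nonneg_left (Real.exp_le_exp.mpr hexp) (by norm_num)
      _ = 8 * Real.exp (-(ν * t) * b ^ 2) *
            (Real.exp (-(ν * q * t)) * Real.exp (-s ^ 2 / (8 * ν * t))) := by
          rw [Real.exp_add, Real.exp_add]; ring
  have hg_int : Integrable (fun b : ℝ => 8 * Real.exp (-(ν * t) * b ^ 2) *
      (Real.exp (-(ν * q * t)) * Real.exp (-s ^ 2 / (8 * ν * t)))) := by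
    exact ((integrable_exp_neg_mul_sq hνt).const_mul 8).mul_const _
  have hmain : ‖(∫ b : ℝ,
      Complex.exp (lamf b * (t : ℂ)) * Complex.exp (-μf b * (s : ℂ)) *
        (2 * Complex.I * (r : ℂ) / (μf b - (r : ℂ))))‖
      ≤ ∫ b : ℝ, 8 * Real.exp (-(ν * t) * b ^ 2) *
          (Real.exp (-(ν * q * t)) * Real.exp (-s ^ 2 / (8 * ν * t))) := by
    exact norm_integral_le_of_norm_le hg_int (Filter.Eventually.of_forall fun b => by
      exact key b)
  have hint : (∫ b : ℝ, 8 * Real.exp (-(ν * t) * b ^ 2) *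
      (Real.exp (-(ν * q * t)) * Real.exp (-s ^ 2 / (8 * ν * t))))
      = 8 * Real.sqrt (Real.pi / (ν * t)) *
          (Real.exp (-(ν * q * t)) * Real.exp (-s ^ 2 / (8 * ν * t))) := by
    rw [MeasureTheory.integral_mul_const, MeasureTheory.integral_const_mul, integral_gaussian]
  refine le_trans hmain ?_
  rw [hint, Real.sqrt_div Real.pi_pos.le]
  exact le_of_eq (by ring)
end
end

section
/- Let ν > 0, let ξ = (ξ₁, ξ₂) ∈ ℝ² be nonzero, and let λ ∈ ℂ. Let u, v : [0,∞) → ℂ² be twice continuously differentiable with compact support, and suppose both satisfy the boundary condition −(φ'(0) + |ξ| φ(0)) + |ξ|⁻¹ (ξ₁ φ₁(0) + ξ₂ φ₂(0)) (ξ₁, ξ₂) = 0 (with φ = u and φ = v respectively). Then ∫₀^∞ ( λ u(z) − ν u''(z) + ν|ξ|² u(z) ) · v(z) dz = ∫₀^∞ u(z) · ( λ v(z) − ν v''(z) + ν|ξ|² v(z) ) dz, where a · b := a₁b₁ + a₂b₂ denotes the bilinear dot product (no conjugation). -/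
open MeasureTheory Set Complex Function Filter

noncomputable section

/-- The bilinear dot product on ℂ², without conjugation. -/
def bdot (a b : Fin 2 → ℂ) : ℂ := a 0 * b 0 + a 1 * b 1

lemma aux_derivWithin_zero {f : ℝ → Fin 2 → ℂ} {x : ℝ} (hx : 0 < x)
    (h : x ∉ tsupport f) : derivWithin f (Ici 0) x = 0 := by
  have hev : f =ᶠ[nhds x] 0 := notMem_tsupport_iff_eventuallyEq.mp h
  rw [derivWithin_of_mem_nhds (Ici_mem_nhds hx), Filter.EventuallyEq.deriv_eq hev,
    show (0 : ℝ → Fin 2 → ℂ) = fun _ => 0 from rfl, deriv_const]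

lemma aux_integrableOn_Ioi {f : ℝ → ℂ} {R : ℝ} (hf : ContinuousOn f (Ici 0))
    (hz : ∀ x, R < x → f x = 0) : IntegrableOn f (Ioi 0) := by
  have h1 : IntegrableOn f (Icc 0 (max R 0)) :=
    (hf.mono Icc_subset_Ici_self).integrableOn_compact isCompact_Icc
  have hz' : EqOn f 0 (Ioi (max R 0)) := fun x hx =>
    hz x (lt_of_le_of_lt (le_max_left R 0) hx)
  have h2 : IntegrableOn f (Ioi (max R 0)) :=
    (integrableOn_congr_fun hz' measurableSet_Ioi).mpr integrableOn_zero
  apply (h1.union h2).mono_set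
  intro x hx
  rcases le_or_gt x (max R 0) with h | h
  · exact Or.inl ⟨le_of_lt hx, h⟩
  · exact Or.inr h

/-- Symmetry of the resolvent operator (λ - A_ξ) for the Stokes vorticity operator
A_ξ = ν(∂_z² - |ξ|²) with the vorticity boundary condition, proved by integration by
parts: the boundary terms cancel due to the common boundary condition. -/
theorem stokes_operator_symmetric
    (ν : ℝ) (hν : 0 < ν) (ξ₁ ξ₂ : ℝ) (hξ : (ξ₁, ξ₂) ≠ (0, 0)) (lam : ℂ)
    (u v : ℝ → Fin 2 → ℂ)
    (hu : ContDiffOn ℝ 2 u (Ici 0)) (hv : ContDiffOn ℝ 2 v (Ici 0))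
    (hucs : HasCompactSupport u) (hvcs : HasCompactSupport v)
    (hubc : -(derivWithin u (Ici 0) 0 + ((Real.sqrt (ξ₁ ^ 2 + ξ₂ ^ 2) : ℝ) : ℂ) • u 0)
        + (((Real.sqrt (ξ₁ ^ 2 + ξ₂ ^ 2) : ℝ) : ℂ))⁻¹ •
          (((ξ₁ : ℂ) * u 0 0 + (ξ₂ : ℂ) * u 0 1) • ![(ξ₁ : ℂ), (ξ₂ : ℂ)]) = 0)
    (hvbc : -(derivWithin v (Ici 0) 0 + ((Real.sqrt (ξ₁ ^ 2 + ξ₂ ^ 2) : ℝ) : ℂ) • v 0)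
        + (((Real.sqrt (ξ₁ ^ 2 + ξ₂ ^ 2) : ℝ) : ℂ))⁻¹ •
          (((ξ₁ : ℂ) * v 0 0 + (ξ₂ : ℂ) * v 0 1) • ![(ξ₁ : ℂ), (ξ₂ : ℂ)]) = 0) :
    ∫ z in Ioi (0 : ℝ),
        bdot (lam • u z - (ν : ℂ) • derivWithin (derivWithin u (Ici 0)) (Ici 0) z
              + ((ν * (ξ₁ ^ 2 + ξ₂ ^ 2) : ℝ) : ℂ) • u z) (v z)
      = ∫ z in Ioi (0 : ℝ),
          bdot (u z) (lam • v z - (ν : ℂ) • derivWithin (derivWithin v (Ici 0)) (Ici 0) z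
              + ((ν * (ξ₁ ^ 2 + ξ₂ ^ 2) : ℝ) : ℂ) • v z) := by
  set q : ℂ := ((Real.sqrt (ξ₁ ^ 2 + ξ₂ ^ 2) : ℝ) : ℂ) with hqdef
  set u' := derivWithin u (Ici 0) with hu'def
  set v' := derivWithin v (Ici 0) with hv'def
  set u'' := derivWithin u' (Ici 0) with hu''def
  set v'' := derivWithin v' (Ici 0) with hv''def
  have uD : UniqueDiffOn ℝ (Ici (0:ℝ)) := uniqueDiffOn_Ici 0
  have hu1 : ContDiffOn ℝ 1 u' (Ici 0) := hu.derivWithin uD (by norm_num)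
  have hv1 : ContDiffOn ℝ 1 v' (Ici 0) := hv.derivWithin uD (by norm_num)
  have hu2 : ContinuousOn u'' (Ici 0) := (hu1.derivWithin (m := 0) uD (by norm_num)).continuousOn
  have hv2 : ContinuousOn v'' (Ici 0) := (hv1.derivWithin (m := 0) uD (by norm_num)).continuousOn
  -- component continuity
  have cu : ∀ i, ContinuousOn (fun z => u z i) (Ici 0) :=
    fun i => (continuous_apply i).comp_continuousOn hu.continuousOn
  have cv : ∀ i, ContinuousOn (fun z => v z i) (Ici 0) :=
    fun i => (continuous_apply i).comp_continuousOn hv.continuousOn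
  have cu' : ∀ i, ContinuousOn (fun z => u' z i) (Ici 0) :=
    fun i => (continuous_apply i).comp_continuousOn hu1.continuousOn
  have cv' : ∀ i, ContinuousOn (fun z => v' z i) (Ici 0) :=
    fun i => (continuous_apply i).comp_continuousOn hv1.continuousOn
  have cu'' : ∀ i, ContinuousOn (fun z => u'' z i) (Ici 0) :=
    fun i => (continuous_apply i).comp_continuousOn hu2
  have cv'' : ∀ i, ContinuousOn (fun z => v'' z i) (Ici 0) :=
    fun i => (continuous_apply i).comp_continuousOn hv2
  -- support bound
  obtain ⟨R, hRu⟩ := hucs.isBounded.subset_closedBall 0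
  obtain ⟨S, hSv⟩ := hvcs.isBounded.subset_closedBall 0
  set B : ℝ := max (max R S) 0 with hBdef
  have hB0 : (0:ℝ) ≤ B := le_max_right _ _
  have huT : ∀ x, B < x → x ∉ tsupport u := by
    intro x hx hmem
    have h3 := hRu hmem
    rw [Real.closedBall_eq_Icc] at h3
    have : R ≤ B := le_trans (le_max_left R S) (le_max_left _ _)
    have := h3.2
    linarith
  have hvT : ∀ x, B < x → x ∉ tsupport v := by
    intro x hx hmem
    have h3 := hSv hmem
    rw [Real.closedBall_eq_Icc] at h3
    have : S ≤ B := le_trans (le_max_right R S) (le_max_left _ _)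
    have := h3.2
    linarith
  have huB : ∀ x, B < x → u x = 0 := fun x hx => image_eq_zero_of_notMem_tsupport (huT x hx)
  have hvB : ∀ x, B < x → v x = 0 := fun x hx => image_eq_zero_of_notMem_tsupport (hvT x hx)
  have hu'B : ∀ x, B < x → u' x = 0 := fun x hx =>
    aux_derivWithin_zero (lt_of_le_of_lt hB0 hx) (huT x hx)
  have hv'B : ∀ x, B < x → v' x = 0 := fun x hx =>
    aux_derivWithin_zero (lt_of_le_of_lt hB0 hx) (hvT x hx)
  have hu'T : tsupport u' ⊆ Iic B := by
    apply closure_minimal _ isClosed_Iic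
    intro x hx
    by_contra h
    exact hx (hu'B x (not_le.mp h))
  have hv'T : tsupport v' ⊆ Iic B := by
    apply closure_minimal _ isClosed_Iic
    intro x hx
    by_contra h
    exact hx (hv'B x (not_le.mp h))
  have hu''B : ∀ x, B < x → u'' x = 0 := fun x hx =>
    aux_derivWithin_zero (lt_of_le_of_lt hB0 hx) (fun hm => absurd (hu'T hm) (not_le.mpr hx))
  have hv''B : ∀ x, B < x → v'' x = 0 := fun x hx =>
    aux_derivWithin_zero (lt_of_le_of_lt hB0 hx) (fun hm => absurd (hv'T hm) (not_le.mpr hx))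
  -- W and G
  set W : ℝ → ℂ := fun z => (u' z 0 * v z 0 + u' z 1 * v z 1)
      - (u z 0 * v' z 0 + u z 1 * v' z 1) with hWdef
  set G : ℝ → ℂ := fun z => (u'' z 0 * v z 0 + u'' z 1 * v z 1)
      - (u z 0 * v'' z 0 + u z 1 * v'' z 1) with hGdef
  -- derivatives
  have hud : ∀ z, 0 < z → HasDerivAt u (u' z) z := fun z hz =>
    ((hu.differentiableOn (by norm_num) z hz.le).hasDerivWithinAt).hasDerivAt (Ici_mem_nhds hz)
  have hvd : ∀ z, 0 < z → HasDerivAt v (v' z) z := fun z hz =>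
    ((hv.differentiableOn (by norm_num) z hz.le).hasDerivWithinAt).hasDerivAt (Ici_mem_nhds hz)
  have hu'd : ∀ z, 0 < z → HasDerivAt u' (u'' z) z := fun z hz =>
    ((hu1.differentiableOn one_ne_zero z hz.le).hasDerivWithinAt).hasDerivAt (Ici_mem_nhds hz)
  have hv'd : ∀ z, 0 < z → HasDerivAt v' (v'' z) z := fun z hz =>
    ((hv1.differentiableOn one_ne_zero z hz.le).hasDerivWithinAt).hasDerivAt (Ici_mem_nhds hz)
  have hWd : ∀ z ∈ Ioi (0:ℝ), HasDerivAt W (G z) z := by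
    intro z hz
    rw [mem_Ioi] at hz
    have U := fun i => hasDerivAt_pi.1 (hud z hz) i
    have V := fun i => hasDerivAt_pi.1 (hvd z hz) i
    have U' := fun i => hasDerivAt_pi.1 (hu'd z hz) i
    have V' := fun i => hasDerivAt_pi.1 (hv'd z hz) i
    have H := ((((U' 0).mul (V 0)).add ((U' 1).mul (V 1))).sub
      (((U 0).mul (V' 0)).add ((U 1).mul (V' 1))))
    have hGz : G z = (u'' z 0 * v z 0 + u' z 0 * v' z 0 + (u'' z 1 * v z 1 + u' z 1 * v' z 1))
        - (u' z 0 * v' z 0 + u z 0 * v'' z 0 + (u' z 1 * v' z 1 + u z 1 * v'' z 1)) := by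
      simp only [hGdef]; ring
    rw [hGz]
    exact H
  -- continuity of W at 0 within Ici 0
  have hWc : ContinuousWithinAt W (Ici 0) 0 := by
    apply ContinuousOn.continuousWithinAt _ self_mem_Ici
    exact (((cu' 0).mul (cv 0)).add ((cu' 1).mul (cv 1))).sub
      (((cu 0).mul (cv' 0)).add ((cu 1).mul (cv' 1)))
  -- integrability of G
  have hGB : ∀ x, B < x → G x = 0 := by
    intro x hx
    simp [hGdef, huB x hx, hvB x hx, hu''B x hx, hv''B x hx]
  have hGint : IntegrableOn G (Ioi 0) := by
    apply aux_integrableOn_Ioi _ hGB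
    exact (((cu'' 0).mul (cv 0)).add ((cu'' 1).mul (cv 1))).sub
      (((cu 0).mul (cv'' 0)).add ((cu 1).mul (cv'' 1)))
  -- W tends to 0 at infinity
  have hWtend : Tendsto W atTop (nhds (0:ℂ)) := by
    apply Tendsto.congr' _ (tendsto_const_nhds (x := (0:ℂ)))
    filter_upwards [eventually_gt_atTop B] with x hx
    simp [hWdef, huB x hx, hvB x hx, hu'B x hx, hv'B x hx]
  -- FTC
  have key : ∫ z in Ioi (0:ℝ), G z = 0 - W 0 :=
    integral_Ioi_of_hasDerivAt_of_tendsto hWc hWd hGint hWtend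
  -- boundary: W 0 = 0
  have hW0 : W 0 = 0 := by
    have hbU0 := congrFun hubc 0
    have hbU1 := congrFun hubc 1
    have hbV0 := congrFun hvbc 0
    have hbV1 := congrFun hvbc 1
    simp only [Pi.add_apply, Pi.neg_apply, Pi.smul_apply, Pi.zero_apply, smul_eq_mul,
      Matrix.cons_val_zero, Matrix.cons_val_one, Matrix.head_cons] at hbU0 hbU1 hbV0 hbV1
    simp only [hWdef]
    linear_combination -(v 0 0) * hbU0 - (v 0 1) * hbU1 + (u 0 0) * hbV0 + (u 0 1) * hbV1
  have hGzero : ∫ z in Ioi (0:ℝ), G z = 0 := by rw [key, hW0, sub_zero]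
  -- pointwise identity
  have hpt : ∀ z : ℝ,
      bdot (lam • u z - (ν : ℂ) • u'' z + ((ν * (ξ₁ ^ 2 + ξ₂ ^ 2) : ℝ) : ℂ) • u z) (v z)
        = bdot (u z) (lam • v z - (ν : ℂ) • v'' z + ((ν * (ξ₁ ^ 2 + ξ₂ ^ 2) : ℝ) : ℂ) • v z)
          + (-(ν:ℂ)) * G z := by
    intro z
    simp only [bdot, hGdef, Pi.add_apply, Pi.sub_apply, Pi.smul_apply, smul_eq_mul]
    ring
  -- integrability of the RHS integrand
  have hRB : ∀ x, B < x →
      bdot (u x) (lam • v x - (ν : ℂ) • v'' x + ((ν * (ξ₁ ^ 2 + ξ₂ ^ 2) : ℝ) : ℂ) • v x) = 0 := by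
    intro x hx
    simp [bdot, huB x hx]
  have hRint : IntegrableOn (fun z =>
      bdot (u z) (lam • v z - (ν : ℂ) • v'' z + ((ν * (ξ₁ ^ 2 + ξ₂ ^ 2) : ℝ) : ℂ) • v z))
      (Ioi 0) := by
    apply aux_integrableOn_Ioi _ hRB
    have : ∀ i : Fin 2, ContinuousOn
        (fun z => lam * v z i - (ν:ℂ) * v'' z i + ((ν * (ξ₁ ^ 2 + ξ₂ ^ 2) : ℝ) : ℂ) * v z i)
        (Ici 0) :=
      fun i => ((continuousOn_const.mul (cv i)).sub (continuousOn_const.mul (cv'' i))).add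
        (continuousOn_const.mul (cv i))
    have hc : ContinuousOn (fun z =>
        u z 0 * (lam * v z 0 - (ν:ℂ) * v'' z 0 + ((ν * (ξ₁ ^ 2 + ξ₂ ^ 2) : ℝ) : ℂ) * v z 0)
        + u z 1 * (lam * v z 1 - (ν:ℂ) * v'' z 1 + ((ν * (ξ₁ ^ 2 + ξ₂ ^ 2) : ℝ) : ℂ) * v z 1))
        (Ici 0) := ((cu 0).mul (this 0)).add ((cu 1).mul (this 1))
    apply hc.congr
    intro z _
    simp only [bdot, Pi.add_apply, Pi.sub_apply, Pi.smul_apply, smul_eq_mul]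
  -- conclusion
  calc ∫ z in Ioi (0:ℝ),
        bdot (lam • u z - (ν : ℂ) • u'' z + ((ν * (ξ₁ ^ 2 + ξ₂ ^ 2) : ℝ) : ℂ) • u z) (v z)
      = ∫ z in Ioi (0:ℝ),
          (bdot (u z) (lam • v z - (ν : ℂ) • v'' z + ((ν * (ξ₁ ^ 2 + ξ₂ ^ 2) : ℝ) : ℂ) • v z)
            + (-(ν:ℂ)) * G z) := by
        exact integral_congr_ae (Filter.Eventually.of_forall fun z => hpt z)
    _ = (∫ z in Ioi (0:ℝ),
          bdot (u z) (lam • v z - (ν : ℂ) • v'' z + ((ν * (ξ₁ ^ 2 + ξ₂ ^ 2) : ℝ) : ℂ) • v z))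
        + ∫ z in Ioi (0:ℝ), (-(ν:ℂ)) * G z :=
        integral_add hRint (hGint.const_mul _)
    _ = ∫ z in Ioi (0:ℝ),
          bdot (u z) (lam • v z - (ν : ℂ) • v'' z + ((ν * (ξ₁ ^ 2 + ξ₂ ^ 2) : ℝ) : ℂ) • v z) := by
        rw [integral_const_mul, hGzero, mul_zero, add_zero]
end
end
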